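/- arXiv:1104.2662 — 4 statements merged into one kernel-verified Lean document; each statement's English description precedes it below -/
import Mathlib

section
/- Let s ≥ 2 and d_1, …, d_s ≥ 2 be integers. For every prime p with p > max_i d_i and every integer n ≥ 1, with q = p^n one has the two inequalities d_1⋯d_s · D_{F}(⌊p/d_1⌋, …, ⌊p/d_s⌋)/p^{s−1} ≤ dim_{F}(R_p/𝔪_p^{[q]})/q^{s−1} ≤ d_1⋯d_s · D_{F}(⌊p/d_1⌋+1, …, ⌊p/d_s⌋+1)/p^{s−1}, where F = ℤ/pℤ. -/
open MvPolynomial Filter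

/-- `Dcolength F s k` : dimension over `F` of
`F[y_1,…,y_s] / (y_1^{k_1}, …, y_s^{k_s}, (y_1+⋯+y_s)^{k_{s+1}})`,
i.e. the quantity `D_F(k_1, …, k_{s+1})` of Han–Monsky (with `s+1` arguments
and `s` variables). -/
noncomputable def Dcolength (F : Type) [CommRing F] (s : ℕ) (k : Fin (s+1) → ℕ) : ℕ :=
  Module.finrank F (MvPolynomial (Fin s) F ⧸
    Ideal.span (Set.range (fun i : Fin s =>
        (X i : MvPolynomial (Fin s) F) ^ k i.castSucc) ∪
      {(∑ i : Fin s, (X i : MvPolynomial (Fin s) F)) ^ k (Fin.last s)}))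

/-- Dimension over `F` of `R/𝔪^{[q]}` where
`R = F[x_1,…,x_s]/(x_1^{d_1}+⋯+x_s^{d_s})` and `𝔪^{[q]} = (x_1^q,…,x_s^q)`. -/
noncomputable def hkColength (F : Type) [CommRing F] (s : ℕ) (d : Fin s → ℕ) (q : ℕ) : ℕ :=
  Module.finrank F (MvPolynomial (Fin s) F ⧸
    Ideal.span (insert (∑ i : Fin s, (X i : MvPolynomial (Fin s) F) ^ d i)
      (Set.range fun i : Fin s => (X i : MvPolynomial (Fin s) F) ^ q)))

/-- The Han–Monsky function `g_λ(x_1,…,x_s)`. -/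
noncomputable def gl (s : ℕ) (x : Fin s → ℝ) (lam : ℤ) : ℝ :=
  ∑ ε ∈ Finset.univ.filter
      (fun ε : Fin s → Bool =>
        2 * (lam : ℝ) ≤ ∑ i, (if ε i then (1:ℝ) else -1) * x i),
    (∏ i, (if ε i then (1:ℝ) else -1)) *
      ((∑ i, (if ε i then (1:ℝ) else -1) * x i) - 2 * (lam : ℝ)) ^ (s - 1)

/-- The Han–Monsky function `g(x_1,…,x_s) = (1/(2^{s-1}(s-1)!)) Σ_λ g_λ(x)`. -/
noncomputable def gfun (s : ℕ) (x : Fin s → ℝ) : ℝ :=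
  (1 / (2 ^ (s-1) * (Nat.factorial (s-1)))) * ∑' lam : ℤ, gl s x lam

variable {F : Type} [Field F]

lemma monomial_eq_smul_prod {m : ℕ} (a : Fin m →₀ ℕ) (c : F) :
    (monomial a c : MvPolynomial (Fin m) F) = c • ∏ i, (X i : MvPolynomial (Fin m) F) ^ a i := by
  rw [monomial_eq, Finsupp.prod_fintype _ _ (fun i => pow_zero _), MvPolynomial.smul_eq_C_mul]

/-- If an ideal contains a power of each variable, the quotient is finite dimensional. -/
lemma finiteDimensional_quotient {m : ℕ} (I : Ideal (MvPolynomial (Fin m) F))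
    (N : Fin m → ℕ) (h : ∀ i, (X i : MvPolynomial (Fin m) F) ^ N i ∈ I) :
    FiniteDimensional F (MvPolynomial (Fin m) F ⧸ I) := by
  classical
  set S := MvPolynomial (Fin m) F
  let g : (∀ i, Fin (N i + 1)) → (S ⧸ I) :=
    fun v => Ideal.Quotient.mkₐ F I (∏ i, (X i : S) ^ (v i : ℕ))
  have hspan : Submodule.span F (Set.range g) = ⊤ := by
    rw [Submodule.eq_top_iff']
    intro x
    obtain ⟨q, rfl⟩ := Ideal.Quotient.mkₐ_surjective F I x
    rw [q.as_sum, map_sum]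
    refine Submodule.sum_mem _ (fun a _ => ?_)
    by_cases ha : ∀ i, a i < N i + 1
    · rw [monomial_eq_smul_prod, map_smul]
      exact Submodule.smul_mem _ _ (Submodule.subset_span ⟨fun i => ⟨a i, ha i⟩, rfl⟩)
    · push_neg at ha
      obtain ⟨i, hi⟩ := ha
      have hmem : monomial a (q.coeff a) ∈ I := by
        have key : (monomial a (q.coeff a) : S)
            = X i ^ N i * monomial (a - Finsupp.single i (N i)) (q.coeff a) := by
          have hidx : Finsupp.single i (N i) + (a - Finsupp.single i (N i)) = a := by
            ext j
            rcases eq_or_ne i j with rfl | hij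
            · simp only [Finsupp.add_apply, Finsupp.tsub_apply, Finsupp.single_eq_same]
              omega
            · simp only [Finsupp.add_apply, Finsupp.tsub_apply, Finsupp.single_eq_of_ne' hij]
              omega
          rw [X_pow_eq_monomial, monomial_mul, one_mul, hidx]
        rw [key]
        exact Ideal.mul_mem_right _ _ (h i)
      have : Ideal.Quotient.mkₐ F I (monomial a (q.coeff a)) = 0 := by
        rw [Ideal.Quotient.mkₐ_eq_mk]
        exact Ideal.Quotient.eq_zero_iff_mem.2 hmem
      rw [this]
      exact Submodule.zero_mem _
  exact Module.Finite.of_surjective (Fintype.linearCombination F g) (by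
    rw [← LinearMap.range_eq_top, Fintype.range_linearCombination, hspan])

/-- Monotonicity of finrank of quotients. -/
lemma finrank_quotient_mono {m : ℕ} {I I' : Ideal (MvPolynomial (Fin m) F)} (h : I ≤ I')
    [FiniteDimensional F (MvPolynomial (Fin m) F ⧸ I)] :
    Module.finrank F (MvPolynomial (Fin m) F ⧸ I') ≤
      Module.finrank F (MvPolynomial (Fin m) F ⧸ I) := by
  set S := MvPolynomial (Fin m) F
  let f : (S ⧸ I) →ₐ[F] (S ⧸ I') :=
    Ideal.Quotient.liftₐ I (Ideal.Quotient.mkₐ F I')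
      (fun a ha => by
        rw [Ideal.Quotient.mkₐ_eq_mk]
        exact Ideal.Quotient.eq_zero_iff_mem.2 (h ha))
  have hsurj : Function.Surjective f.toLinearMap := by
    intro x
    obtain ⟨q, rfl⟩ := Ideal.Quotient.mk_surjective x
    exact ⟨Ideal.Quotient.mk I q, rfl⟩
  calc Module.finrank F (S ⧸ I')
      = Module.finrank F (LinearMap.range f.toLinearMap) := by
        rw [LinearMap.range_eq_top.2 hsurj, finrank_top]
    _ ≤ Module.finrank F (S ⧸ I) := LinearMap.finrank_range_le _


variable {F : Type} [Field F]

section Decomp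
variable {m : ℕ} (d : Fin m → ℕ)

/-- Product-of-powers monomial with function exponents. -/
noncomputable def Mn (e : Fin m → ℕ) : MvPolynomial (Fin m) F := ∏ i, (X i : MvPolynomial (Fin m) F) ^ e i

lemma Mn_mul (e e' : Fin m → ℕ) : (Mn e : MvPolynomial (Fin m) F) * Mn e' = Mn (e + e') := by
  simp [Mn, ← Finset.prod_mul_distrib, pow_add]

lemma Mn_eq_monomial (e : Fin m → ℕ) :
    (Mn e : MvPolynomial (Fin m) F) = monomial (Finsupp.equivFunOnFinite.symm e) 1 := by
  rw [monomial_eq, Finsupp.prod_fintype _ _ (fun i => pow_zero _)]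
  simp [Mn]

lemma monomial_eq_Mn (a : Fin m →₀ ℕ) :
    (monomial a 1 : MvPolynomial (Fin m) F) = Mn (a : Fin m → ℕ) := by
  rw [Mn_eq_monomial]
  congr 1
  ext i; simp

/-- The substitution `X i ↦ X i ^ d i`. -/
noncomputable def powSub : MvPolynomial (Fin m) F →ₐ[F] MvPolynomial (Fin m) F :=
  aeval fun i => X i ^ d i

lemma powSub_Mn (e : Fin m → ℕ) :
    powSub (F := F) d (Mn e) = Mn (fun i => d i * e i) := by
  simp only [Mn, powSub, map_prod, map_pow, aeval_X, ← pow_mul]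

variable (F) in
/-- The assembling linear map `(g_j)_j ↦ Σ_j X^j · powSub(g_j)`. -/
noncomputable def asm : ((∀ i, Fin (d i)) → MvPolynomial (Fin m) F) →ₗ[F] MvPolynomial (Fin m) F where
  toFun g := ∑ j, Mn (fun i => (j i : ℕ)) * powSub d (g j)
  map_add' g h := by simp [mul_add, Finset.sum_add_distrib]
  map_smul' c g := by simp [Finset.smul_sum, mul_smul_comm]

lemma asm_apply (g : (∀ i, Fin (d i)) → MvPolynomial (Fin m) F) :
    asm F d g = ∑ j, Mn (fun i => (j i : ℕ)) * powSub d (g j) := rfl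

lemma asm_single (j : ∀ i, Fin (d i)) (v : MvPolynomial (Fin m) F) :
    asm F d (Pi.single j v) = Mn (fun i => (j i : ℕ)) * powSub d v := by
  classical
  rw [asm_apply, Finset.sum_eq_single j]
  · simp
  · intro j' _ hj'
    rw [Pi.single_eq_of_ne hj', map_zero, mul_zero]
  · intro h; exact absurd (Finset.mem_univ _) h

variable (F) in
/-- The desassembling linear map. -/
noncomputable def dsm (hd : ∀ i, 0 < d i) :
    MvPolynomial (Fin m) F →ₗ[F] ((∀ i, Fin (d i)) → MvPolynomial (Fin m) F) :=
  (basisMonomials (Fin m) F).constr F fun a =>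
    Pi.single (fun i => (⟨a i % d i, Nat.mod_lt _ (hd i)⟩ : Fin (d i)))
      (monomial (Finsupp.equivFunOnFinite.symm fun i => a i / d i) 1)

lemma dsm_monomial (hd : ∀ i, 0 < d i) (a : Fin m →₀ ℕ) :
    dsm F d hd (monomial a 1) =
      Pi.single (fun i => (⟨a i % d i, Nat.mod_lt _ (hd i)⟩ : Fin (d i)))
        (monomial (Finsupp.equivFunOnFinite.symm fun i => a i / d i) 1) := by
  have : (monomial a 1 : MvPolynomial (Fin m) F) = basisMonomials (Fin m) F a := by
    rw [coe_basisMonomials]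
  rw [this, dsm, Module.Basis.constr_basis]

lemma asm_dsm (hd : ∀ i, 0 < d i) :
    (asm F d).comp (dsm F d hd) = LinearMap.id := by
  refine (basisMonomials (Fin m) F).ext fun a => ?_
  have hb : basisMonomials (Fin m) F a = monomial a 1 := by rw [coe_basisMonomials]
  rw [hb, LinearMap.comp_apply, dsm_monomial, asm_single, ← Mn_eq_monomial,
    powSub_Mn, Mn_mul, LinearMap.id_apply, monomial_eq_Mn]
  congr 1
  funext i
  simp only [Pi.add_apply, Finsupp.coe_equivFunOnFinite_symm]
  exact Nat.mod_add_div _ _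

lemma dsm_asm (hd : ∀ i, 0 < d i) :
    (dsm F d hd).comp (asm F d) = LinearMap.id := by
  classical
  refine (Pi.basis fun _ : (∀ i, Fin (d i)) => basisMonomials (Fin m) F).ext fun ja => ?_
  obtain ⟨j, a⟩ := ja
  rw [Pi.basis_apply]
  have hb : basisMonomials (Fin m) F a = monomial a 1 := by rw [coe_basisMonomials]
  rw [hb, LinearMap.comp_apply, asm_single, monomial_eq_Mn, powSub_Mn, Mn_mul, Mn_eq_monomial,
    dsm_monomial, LinearMap.id_apply]
  have key : ∀ i, (Finsupp.equivFunOnFinite.symm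
      ((fun i => (j i : ℕ)) + fun i => d i * a i)) i = (j i : ℕ) + d i * a i := by
    intro i
    rw [Finsupp.coe_equivFunOnFinite_symm, Pi.add_apply]
  have e1 : (fun i => (⟨(Finsupp.equivFunOnFinite.symm
      ((fun i => (j i : ℕ)) + fun i => d i * a i)) i % d i,
        Nat.mod_lt _ (hd i)⟩ : Fin (d i))) = j := by
    funext i
    ext
    show _ % d i = ((j i : ℕ))
    rw [key i, Nat.add_mul_mod_self_left, Nat.mod_eq_of_lt (j i).isLt]
  have e2 : (Finsupp.equivFunOnFinite.symm fun i => (Finsupp.equivFunOnFinite.symm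
      ((fun i => (j i : ℕ)) + fun i => d i * a i)) i / d i) = a := by
    ext i
    rw [Finsupp.coe_equivFunOnFinite_symm, key i,
      Nat.add_mul_div_left _ _ (hd i), Nat.div_eq_of_lt (j i).isLt, zero_add]
  rw [e1, e2]
  exact congrArg (Pi.single j) (monomial_eq_Mn a)



variable (F) in
noncomputable def asmEquiv (hd : ∀ i, 0 < d i) :
    ((∀ i, Fin (d i)) → MvPolynomial (Fin m) F) ≃ₗ[F] MvPolynomial (Fin m) F :=
  LinearEquiv.ofLinear (asm F d) (dsm F d hd) (asm_dsm d hd) (dsm_asm d hd)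

lemma asm_surjective (hd : ∀ i, 0 < d i) : Function.Surjective (asm F d) :=
  (asmEquiv F d hd).surjective

lemma helper_mul_powSub_mem (hd : ∀ i, 0 < d i) (J : Ideal (MvPolynomial (Fin m) F))
    (s : MvPolynomial (Fin m) F) {h : MvPolynomial (Fin m) F} (hh : h ∈ J) :
    s * powSub d h ∈ Submodule.map (asm F d)
      (Submodule.pi Set.univ fun _ : (∀ i, Fin (d i)) => J.restrictScalars F) := by
  obtain ⟨c, rfl⟩ := asm_surjective d hd s
  refine ⟨fun j => c j * h, fun j _ => J.mul_mem_left (c j) hh, ?_⟩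
  rw [asm_apply, asm_apply, Finset.sum_mul]
  exact Finset.sum_congr rfl fun j _ => by rw [map_mul, mul_assoc]

lemma asm_map_pi (hd : ∀ i, 0 < d i) (J : Ideal (MvPolynomial (Fin m) F)) :
    Submodule.map (asm F d)
        (Submodule.pi Set.univ fun _ : (∀ i, Fin (d i)) => J.restrictScalars F)
      = (Ideal.map (powSub d) J).restrictScalars F := by
  apply le_antisymm
  · rintro x ⟨g, hg, rfl⟩
    rw [Submodule.restrictScalars_mem, asm_apply]
    refine Ideal.sum_mem _ fun j _ => ?_
    exact Ideal.mul_mem_left _ _ (Ideal.mem_map_of_mem _ (hg j trivial))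
  · intro x hx
    rw [Submodule.restrictScalars_mem, Ideal.map, Ideal.span] at hx
    refine Submodule.span_induction ?_ ?_ ?_ ?_ hx
    · rintro y ⟨h, hh, rfl⟩
      simpa using helper_mul_powSub_mem d hd J 1 hh
    · exact Submodule.zero_mem _
    · intro y z _ _ hy hz; exact Submodule.add_mem _ hy hz
    · intro a y _ hy
      obtain ⟨g, hg, rfl⟩ := hy
      rw [smul_eq_mul, asm_apply, Finset.mul_sum]
      refine Submodule.sum_mem _ fun j _ => ?_
      rw [← mul_assoc]
      exact helper_mul_powSub_mem d hd J _ (hg j trivial)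

lemma finrank_quotient_map_powSub (hd : ∀ i, 0 < d i) (J : Ideal (MvPolynomial (Fin m) F))
    [FiniteDimensional F (MvPolynomial (Fin m) F ⧸ J)] :
    Module.finrank F (MvPolynomial (Fin m) F ⧸ Ideal.map (powSub d) J)
      = (∏ i, d i) * Module.finrank F (MvPolynomial (Fin m) F ⧸ J) := by
  classical
  set S := MvPolynomial (Fin m) F
  set ι := (∀ i, Fin (d i))
  haveI : Module.Finite F (S ⧸ Submodule.restrictScalars F J) :=
    Module.Finite.equiv (Submodule.Quotient.restrictScalarsEquiv F J).symm
  have e0 : (S ⧸ Submodule.restrictScalars F (Ideal.map (powSub d) J)) ≃ₗ[F]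
      (S ⧸ Ideal.map (powSub d) J) :=
    Submodule.Quotient.restrictScalarsEquiv F _
  have e1 : ((ι → S) ⧸ Submodule.pi Set.univ fun _ : ι => J.restrictScalars F) ≃ₗ[F]
      (S ⧸ Submodule.restrictScalars F (Ideal.map (powSub d) J)) :=
    Submodule.Quotient.equiv _ _ (asmEquiv F d hd) (asm_map_pi d hd J)
  have e2 := Submodule.quotientPi (fun _ : ι => J.restrictScalars F)
  have e3 : ∀ _j : ι, (S ⧸ Submodule.restrictScalars F J) ≃ₗ[F] (S ⧸ J) :=
    fun _ => Submodule.Quotient.restrictScalarsEquiv F J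
  calc Module.finrank F (S ⧸ Ideal.map (powSub d) J)
      = Module.finrank F ((ι → S) ⧸ Submodule.pi Set.univ fun _ : ι => J.restrictScalars F) :=
        ((e1.trans e0).symm.finrank_eq).symm ▸ rfl
    _ = Module.finrank F (∀ _j : ι, S ⧸ Submodule.restrictScalars F J) := e2.finrank_eq
    _ = ∑ _j : ι, Module.finrank F (S ⧸ Submodule.restrictScalars F J) :=
        Module.finrank_pi_fintype F
    _ = (∏ i, d i) * Module.finrank F (S ⧸ J) := by
        rw [Finset.sum_const, Finset.card_univ, smul_eq_mul,
          (Submodule.Quotient.restrictScalarsEquiv F J).finrank_eq]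
        congr 1
        simp [ι]

end Decomp


section Apps
variable {F : Type} [Field F]

noncomputable def DIdeal (F : Type) [Field F] (s : ℕ) (k : Fin (s+1) → ℕ) :
    Ideal (MvPolynomial (Fin s) F) :=
  Ideal.span (Set.range (fun i : Fin s =>
      (X i : MvPolynomial (Fin s) F) ^ k i.castSucc) ∪
    {(∑ i : Fin s, (X i : MvPolynomial (Fin s) F)) ^ k (Fin.last s)})

lemma Dcolength_eq (s : ℕ) (k : Fin (s+1) → ℕ) :
    Dcolength F s k = Module.finrank F (MvPolynomial (Fin s) F ⧸ DIdeal F s k) := rfl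

instance DIdeal_finiteDimensional (s : ℕ) (k : Fin (s+1) → ℕ) :
    FiniteDimensional F (MvPolynomial (Fin s) F ⧸ DIdeal F s k) :=
  finiteDimensional_quotient _ (fun i => k i.castSucc)
    (fun i => Ideal.subset_span (Or.inl ⟨i, rfl⟩))

lemma Dcolength_mono (s : ℕ) {k k' : Fin (s+1) → ℕ} (h : ∀ i, k i ≤ k' i) :
    Dcolength F s k ≤ Dcolength F s k' := by
  rw [Dcolength_eq, Dcolength_eq]
  refine finrank_quotient_mono ?_
  simp only [DIdeal]
  rw [Ideal.span_le]
  rintro x (⟨i, rfl⟩ | rfl)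
  · show (X i : MvPolynomial (Fin s) F) ^ k' (i.castSucc) ∈ _
    have hh : (X i : MvPolynomial (Fin s) F) ^ k' (i.castSucc)
        = X i ^ k i.castSucc * X i ^ (k' i.castSucc - k i.castSucc) := by
      rw [← pow_add, Nat.add_sub_cancel' (h _)]
    rw [hh]
    exact Ideal.mul_mem_right _ _ (Ideal.subset_span (Or.inl ⟨i, rfl⟩))
  · have hh : (∑ i : Fin s, (X i : MvPolynomial (Fin s) F)) ^ k' (Fin.last s)
        = (∑ i : Fin s, (X i : MvPolynomial (Fin s) F)) ^ k (Fin.last s)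
          * (∑ i : Fin s, (X i : MvPolynomial (Fin s) F)) ^ (k' (Fin.last s) - k (Fin.last s)) := by
      rw [← pow_add, Nat.add_sub_cancel' (h _)]
    rw [hh]
    exact Ideal.mul_mem_right _ _ (Ideal.subset_span (Or.inr rfl))

lemma Dcolength_p_mul (s : ℕ) (k : Fin (s+1) → ℕ) (p : ℕ) [hp : Fact p.Prime] [CharP F p] :
    Dcolength F s (fun i => p * k i) = p ^ s * Dcolength F s k := by
  haveI : ExpChar (MvPolynomial (Fin s) F) p := ExpChar.prime hp.out
  have hr : (⇑(powSub (F := F) fun _ : Fin s => p) ∘ fun i : Fin s => X i ^ k i.castSucc)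
      = fun i : Fin s => (X i : MvPolynomial (Fin s) F) ^ (p * k i.castSucc) := by
    funext i
    simp only [Function.comp_apply, map_pow, powSub, aeval_X, ← pow_mul, mul_comm]
  have hw : (powSub (F := F) fun _ : Fin s => p)
        ((∑ i : Fin s, (X i : MvPolynomial (Fin s) F)) ^ k (Fin.last s))
      = (∑ i : Fin s, (X i : MvPolynomial (Fin s) F)) ^ (p * k (Fin.last s)) := by
    rw [map_pow, map_sum]
    have h1 : ∀ i : Fin s, (powSub (F := F) fun _ : Fin s => p) (X i) = X i ^ p :=
      fun i => by simp [powSub]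
    rw [Finset.sum_congr rfl (fun i _ => h1 i), ← sum_pow_char p Finset.univ
      (fun i : Fin s => (X i : MvPolynomial (Fin s) F)), ← pow_mul, mul_comm]
  have hmap : DIdeal F s (fun i => p * k i)
      = Ideal.map (powSub (fun _ : Fin s => p)) (DIdeal F s k) := by
    simp only [DIdeal]
    rw [Ideal.map_span, Set.image_union, Set.image_singleton, ← Set.range_comp, hr, hw]
  rw [Dcolength_eq, Dcolength_eq, hmap,
    finrank_quotient_map_powSub (fun _ : Fin s => p) (fun _ => hp.out.pos) (DIdeal F s k)]
  simp

lemma Dcolength_pow_mul (s : ℕ) (k : Fin (s+1) → ℕ) (p : ℕ) [hp : Fact p.Prime] [CharP F p]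
    (t : ℕ) : Dcolength F s (fun i => p ^ t * k i) = p ^ (t * s) * Dcolength F s k := by
  induction t with
  | zero => simp
  | succ t ih =>
    have hh : (fun i => p ^ (t+1) * k i) = fun i => p * (p ^ t * k i) := by
      funext i; ring
    rw [hh, Dcolength_p_mul s (fun i => p ^ t * k i) p, ih]
    ring

end Apps

section CApps
variable {F : Type} [Field F]

noncomputable def CIdeal (F : Type) [Field F] (m : ℕ) (k : Fin m → ℕ) :
    Ideal (MvPolynomial (Fin m) F) :=
  Ideal.span (Set.range (fun i : Fin m => (X i : MvPolynomial (Fin m) F) ^ k i)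
    ∪ {∑ i : Fin m, (X i : MvPolynomial (Fin m) F)})

noncomputable def Ccol (F : Type) [Field F] (m : ℕ) (k : Fin m → ℕ) : ℕ :=
  Module.finrank F (MvPolynomial (Fin m) F ⧸ CIdeal F m k)

instance CIdeal_finiteDimensional (m : ℕ) (k : Fin m → ℕ) :
    FiniteDimensional F (MvPolynomial (Fin m) F ⧸ CIdeal F m k) :=
  finiteDimensional_quotient _ (fun i => k i)
    (fun i => Ideal.subset_span (Or.inl ⟨i, rfl⟩))

lemma CIdeal_map (m : ℕ) (d : Fin m → ℕ) (k : Fin m → ℕ) :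
    Ideal.map (powSub d) (CIdeal F m k)
      = Ideal.span (Set.range (fun i : Fin m =>
          (X i : MvPolynomial (Fin m) F) ^ (d i * k i))
        ∪ {∑ i : Fin m, (X i : MvPolynomial (Fin m) F) ^ d i}) := by
  have hr : (⇑(powSub (F := F) d) ∘ fun i : Fin m => X i ^ k i)
      = fun i : Fin m => (X i : MvPolynomial (Fin m) F) ^ (d i * k i) := by
    funext i
    simp only [Function.comp_apply, map_pow, powSub, aeval_X, ← pow_mul]
  have hw : (powSub (F := F) d) (∑ i : Fin m, (X i : MvPolynomial (Fin m) F))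
      = ∑ i : Fin m, (X i : MvPolynomial (Fin m) F) ^ d i := by
    simp [powSub]
  simp only [CIdeal]
  rw [Ideal.map_span, Set.image_union, Set.image_singleton, ← Set.range_comp, hr, hw]

/-- The ideal of `hkColength`. -/
noncomputable def hkIdeal (F : Type) [Field F] (m : ℕ) (d : Fin m → ℕ) (q : ℕ) :
    Ideal (MvPolynomial (Fin m) F) :=
  Ideal.span (insert (∑ i : Fin m, (X i : MvPolynomial (Fin m) F) ^ d i)
    (Set.range fun i : Fin m => (X i : MvPolynomial (Fin m) F) ^ q))

lemma hkColength_eq (m : ℕ) (d : Fin m → ℕ) (q : ℕ) :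
    hkColength F m d q = Module.finrank F (MvPolynomial (Fin m) F ⧸ hkIdeal F m d q) := rfl

instance hkIdeal_finiteDimensional (m : ℕ) (d : Fin m → ℕ) (q : ℕ) :
    FiniteDimensional F (MvPolynomial (Fin m) F ⧸ hkIdeal F m d q) :=
  finiteDimensional_quotient _ (fun _ => q)
    (fun i => Ideal.subset_span (Or.inr ⟨i, rfl⟩))

lemma hk_lower (m : ℕ) (d : Fin m → ℕ) (hd : ∀ i, 0 < d i) (q : ℕ) (K : Fin m → ℕ)
    (hK : ∀ i, d i * K i ≤ q) :
    (∏ i, d i) * Ccol F m K ≤ hkColength F m d q := by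
  have hle : hkIdeal F m d q ≤ Ideal.map (powSub d) (CIdeal F m K) := by
    rw [CIdeal_map, hkIdeal, Ideal.span_le]
    rintro x (rfl | ⟨i, rfl⟩)
    · exact Ideal.subset_span (Or.inr rfl)
    · show (X i : MvPolynomial (Fin m) F) ^ q ∈ _
      have hh : (X i : MvPolynomial (Fin m) F) ^ q
          = X i ^ (d i * K i) * X i ^ (q - d i * K i) := by
        rw [← pow_add, Nat.add_sub_cancel' (hK i)]
      rw [hh]
      exact Ideal.mul_mem_right _ _ (Ideal.subset_span (Or.inl ⟨i, rfl⟩))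
  calc (∏ i, d i) * Ccol F m K
      = Module.finrank F (MvPolynomial (Fin m) F ⧸ Ideal.map (powSub d) (CIdeal F m K)) :=
        (finrank_quotient_map_powSub d hd (CIdeal F m K)).symm
    _ ≤ hkColength F m d q := by
        rw [hkColength_eq]
        exact finrank_quotient_mono hle

lemma hk_upper (m : ℕ) (d : Fin m → ℕ) (hd : ∀ i, 0 < d i) (q : ℕ) (K : Fin m → ℕ)
    (hK : ∀ i, q ≤ d i * K i) :
    hkColength F m d q ≤ (∏ i, d i) * Ccol F m K := by
  have hle : Ideal.map (powSub d) (CIdeal F m K) ≤ hkIdeal F m d q := by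
    rw [CIdeal_map, Ideal.span_le]
    rintro x (⟨i, rfl⟩ | rfl)
    · show (X i : MvPolynomial (Fin m) F) ^ (d i * K i) ∈ _
      have hh : (X i : MvPolynomial (Fin m) F) ^ (d i * K i)
          = X i ^ q * X i ^ (d i * K i - q) := by
        rw [← pow_add, Nat.add_sub_cancel' (hK i)]
      rw [hh]
      exact Ideal.mul_mem_right _ _ (Ideal.subset_span (Set.mem_insert_of_mem _ ⟨i, rfl⟩))
    · exact Ideal.subset_span (Set.mem_insert _ _)
  haveI : FiniteDimensional F
      (MvPolynomial (Fin m) F ⧸ Ideal.map (powSub d) (CIdeal F m K)) := by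
    rw [CIdeal_map]
    exact finiteDimensional_quotient _ (fun i => d i * K i)
      (fun i => Ideal.subset_span (Or.inl ⟨i, rfl⟩))
  calc hkColength F m d q ≤
      Module.finrank F (MvPolynomial (Fin m) F ⧸ Ideal.map (powSub d) (CIdeal F m K)) := by
        rw [hkColength_eq]
        exact finrank_quotient_mono hle
    _ = (∏ i, d i) * Ccol F m K := finrank_quotient_map_powSub d hd (CIdeal F m K)

end CApps

section Elim
variable {F : Type} [Field F]

lemma Ccol_eq_Dcolength (s : ℕ) (k : Fin (s+1) → ℕ) :
    Ccol F (s+1) k = Dcolength F s k := by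
  classical
  set A := MvPolynomial (Fin (s+1)) F with hA
  set B := MvPolynomial (Fin s) F with hB
  set φ1 : A →ₐ[F] B := aeval (fun i : Fin (s+1) =>
    Fin.lastCases (-(∑ j : Fin s, (X j : B))) (fun i' : Fin s => X i') i) with hφ1
  set φ2 : B →ₐ[F] A := aeval (fun i : Fin s => (X i.castSucc : A)) with hφ2
  have hφ1X_cast : ∀ i : Fin s, φ1 (X i.castSucc) = X i := by
    intro i
    rw [hφ1, aeval_X, Fin.lastCases_castSucc]
  have hφ1X_last : φ1 (X (Fin.last s)) = -(∑ j : Fin s, (X j : B)) := by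
    rw [hφ1, aeval_X, Fin.lastCases_last]
  have hφ2X : ∀ i : Fin s, φ2 (X i) = X i.castSucc := fun i => by rw [hφ2, aeval_X]
  have hSmem : (∑ i : Fin (s+1), (X i : A)) ∈ CIdeal F (s+1) k :=
    Ideal.subset_span (Or.inr rfl)
  have hXpow : ∀ i : Fin (s+1), (X i : A) ^ k i ∈ CIdeal F (s+1) k :=
    fun i => Ideal.subset_span (Or.inl ⟨i, rfl⟩)
  have hDpow : ∀ i : Fin s, (X i : B) ^ k i.castSucc ∈ DIdeal F s k :=
    fun i => Ideal.subset_span (Or.inl ⟨i, rfl⟩)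
  have hDsum : (∑ i : Fin s, (X i : B)) ^ k (Fin.last s) ∈ DIdeal F s k :=
    Ideal.subset_span (Or.inr rfl)
  -- the key sum identity in A
  have hsum_split : (∑ i : Fin s, (X i.castSucc : A))
      = (∑ i : Fin (s+1), (X i : A)) - X (Fin.last s) := by
    rw [Fin.sum_univ_castSucc]
    ring
  have hsub1 : CIdeal F (s+1) k ≤ Ideal.comap φ1 (DIdeal F s k) := by
    rw [CIdeal, Ideal.span_le]
    rintro x (⟨i, rfl⟩ | rfl)
    · show φ1 ((X i : A) ^ k i) ∈ DIdeal F s k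
      rw [map_pow]
      induction i using Fin.lastCases with
      | last =>
        rw [hφ1X_last, neg_pow]
        exact Ideal.mul_mem_left _ _ hDsum
      | cast i' =>
        rw [hφ1X_cast]
        exact hDpow i'
    · show φ1 (∑ i : Fin (s+1), (X i : A)) ∈ DIdeal F s k
      have : φ1 (∑ i : Fin (s+1), (X i : A)) = 0 := by
        rw [map_sum, Fin.sum_univ_castSucc]
        simp only [hφ1X_cast, hφ1X_last]
        ring
      rw [this]
      exact Ideal.zero_mem _
  have hsub2 : DIdeal F s k ≤ Ideal.comap φ2 (CIdeal F (s+1) k) := by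
    rw [DIdeal, Ideal.span_le]
    rintro x (⟨i, rfl⟩ | rfl)
    · show φ2 ((X i : B) ^ k i.castSucc) ∈ CIdeal F (s+1) k
      rw [map_pow, hφ2X]
      exact hXpow i.castSucc
    · show φ2 ((∑ i : Fin s, (X i : B)) ^ k (Fin.last s)) ∈ CIdeal F (s+1) k
      rw [← Ideal.Quotient.eq_zero_iff_mem, map_pow, map_sum]
      simp only [hφ2X]
      rw [hsum_split, map_pow, map_sub, Ideal.Quotient.eq_zero_iff_mem.2 hSmem, zero_sub]
      have hz : (Ideal.Quotient.mk (CIdeal F (s+1) k) (X (Fin.last s))) ^ k (Fin.last s)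
          = 0 := by
        rw [← map_pow]
        exact Ideal.Quotient.eq_zero_iff_mem.2 (hXpow (Fin.last s))
      calc (-(Ideal.Quotient.mk (CIdeal F (s+1) k) (X (Fin.last s)))) ^ k (Fin.last s)
          = (-1) ^ k (Fin.last s)
            * (Ideal.Quotient.mk (CIdeal F (s+1) k) (X (Fin.last s))) ^ k (Fin.last s) := by
            ring
        _ = 0 := by rw [hz, mul_zero]
  set f1 : (A ⧸ CIdeal F (s+1) k) →ₐ[F] (B ⧸ DIdeal F s k) :=
    Ideal.Quotient.liftₐ _ ((Ideal.Quotient.mkₐ F (DIdeal F s k)).comp φ1)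
      (fun a ha => by
        simp only [AlgHom.comp_apply, Ideal.Quotient.mkₐ_eq_mk]
        exact Ideal.Quotient.eq_zero_iff_mem.2 (hsub1 ha)) with hf1
  set f2 : (B ⧸ DIdeal F s k) →ₐ[F] (A ⧸ CIdeal F (s+1) k) :=
    Ideal.Quotient.liftₐ _ ((Ideal.Quotient.mkₐ F (CIdeal F (s+1) k)).comp φ2)
      (fun a ha => by
        simp only [AlgHom.comp_apply, Ideal.Quotient.mkₐ_eq_mk]
        exact Ideal.Quotient.eq_zero_iff_mem.2 (hsub2 ha)) with hf2
  have hf1mk : ∀ x : A, f1 (Ideal.Quotient.mk _ x) = Ideal.Quotient.mk _ (φ1 x) := by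
    intro x
    rw [hf1]
    rfl
  have hf2mk : ∀ x : B, f2 (Ideal.Quotient.mk _ x) = Ideal.Quotient.mk _ (φ2 x) := by
    intro x
    rw [hf2]
    rfl
  have hcomp1 : f1.comp f2 = AlgHom.id F (B ⧸ DIdeal F s k) := by
    refine Ideal.Quotient.algHom_ext F ?_
    refine MvPolynomial.algHom_ext fun i => ?_
    simp only [AlgHom.comp_apply, Ideal.Quotient.mkₐ_eq_mk, AlgHom.id_apply]
    rw [hf2mk, hφ2X, hf1mk, hφ1X_cast]
  have hcomp2 : f2.comp f1 = AlgHom.id F (A ⧸ CIdeal F (s+1) k) := by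
    refine Ideal.Quotient.algHom_ext F ?_
    refine MvPolynomial.algHom_ext fun i => ?_
    simp only [AlgHom.comp_apply, Ideal.Quotient.mkₐ_eq_mk, AlgHom.id_apply]
    rw [hf1mk]
    induction i using Fin.lastCases with
    | last =>
      rw [hφ1X_last, hf2mk, map_neg, map_sum]
      simp only [hφ2X]
      rw [hsum_split, neg_sub, map_sub, Ideal.Quotient.eq_zero_iff_mem.2 hSmem, sub_zero]
    | cast i' =>
      rw [hφ1X_cast, hf2mk, hφ2X]
  exact (AlgEquiv.ofAlgHom f1 f2 hcomp1 hcomp2).toLinearEquiv.finrank_eq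

end Elim

section Numeric

lemma num_a {d q : ℕ} : d * (q / d) ≤ q := by
  rw [mul_comm]
  exact Nat.div_mul_le_self _ _

lemma num_b {d q : ℕ} (hd : 0 < d) : q ≤ d * (q / d + 1) := by
  calc q = d * (q / d) + q % d := (Nat.div_add_mod q d).symm
    _ ≤ d * (q / d) + d := Nat.add_le_add_left (Nat.mod_lt _ hd).le _
    _ = d * (q / d + 1) := by ring

lemma num_c {d p t : ℕ} (hd : 0 < d) : p ^ t * (p / d) ≤ (p ^ t * p) / d := by
  rw [Nat.le_div_iff_mul_le hd]
  calc p ^ t * (p / d) * d = p ^ t * (p / d * d) := by ring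
    _ ≤ p ^ t * p := Nat.mul_le_mul_left _ (Nat.div_mul_le_self _ _)

lemma num_d {d p t : ℕ} (hd : 0 < d) (hp : 0 < p) :
    (p ^ t * p) / d + 1 ≤ p ^ t * (p / d + 1) := by
  have h : (p ^ t * p) / d < p ^ t * (p / d + 1) := by
    rw [Nat.div_lt_iff_lt_mul hd]
    have h1 : p < (p / d + 1) * d := by
      calc p = d * (p / d) + p % d := (Nat.div_add_mod p d).symm
        _ < d * (p / d) + d := Nat.add_lt_add_left (Nat.mod_lt _ hd) _
        _ = (p / d + 1) * d := by ring
    calc p ^ t * p < p ^ t * ((p / d + 1) * d) :=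
          Nat.mul_lt_mul_of_pos_left h1 (pow_pos hp t)
      _ = p ^ t * (p / d + 1) * d := by ring
  omega

end Numeric


/-- Gessel–Monsky inequalities: for a diagonal hypersurface in `s+1 ≥ 2` variables
with exponents `d i ≥ 2`, every prime `p` exceeding all `d i`, and every `n ≥ 1`
(with `q = p^n`), the normalized colength of the Frobenius power of the maximal
ideal is squeezed between the two Han–Monsky `D`-terms. -/
theorem statement0 (s : ℕ) (hs : 1 ≤ s) (d : Fin (s+1) → ℕ) (hd : ∀ i, 2 ≤ d i)
    (p : ℕ) (hp : p.Prime) (hpd : ∀ i, d i < p) (n : ℕ) (hn : 1 ≤ n) :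
    (∏ i, (d i : ℝ)) * (Dcolength (ZMod p) s (fun i => p / d i) : ℝ) / (p : ℝ) ^ s
        ≤ (hkColength (ZMod p) (s+1) d (p ^ n) : ℝ) / ((p : ℝ) ^ n) ^ s ∧
      (hkColength (ZMod p) (s+1) d (p ^ n) : ℝ) / ((p : ℝ) ^ n) ^ s
        ≤ (∏ i, (d i : ℝ)) * (Dcolength (ZMod p) s (fun i => p / d i + 1) : ℝ) / (p : ℝ) ^ s := by
  haveI : Fact p.Prime := ⟨hp⟩
  set F := ZMod p
  have hdpos : ∀ i, 0 < d i := fun i => lt_of_lt_of_le two_pos (hd i)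
  set q : ℕ := p ^ n with hq
  set t : ℕ := n - 1 with ht
  have hqt : q = p ^ t * p := by
    rw [hq, ht, ← pow_succ]
    congr 1
    omega
  -- natural number bounds
  have lower : (∏ i, d i) * (p ^ (t * s) * Dcolength F s (fun i => p / d i))
      ≤ hkColength F (s+1) d q := by
    calc (∏ i, d i) * (p ^ (t * s) * Dcolength F s (fun i => p / d i))
        = (∏ i, d i) * Dcolength F s (fun i => p ^ t * (p / d i)) := by
          rw [Dcolength_pow_mul]
      _ ≤ (∏ i, d i) * Dcolength F s (fun i => q / d i) := by
          refine Nat.mul_le_mul_left _ (Dcolength_mono s fun i => ?_)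
          rw [hqt]
          exact num_c (hdpos i)
      _ = (∏ i, d i) * Ccol F (s+1) (fun i => q / d i) := by
          rw [Ccol_eq_Dcolength]
      _ ≤ hkColength F (s+1) d q :=
          hk_lower (s+1) d hdpos q _ (fun i => num_a)
  have upper : hkColength F (s+1) d q
      ≤ (∏ i, d i) * (p ^ (t * s) * Dcolength F s (fun i => p / d i + 1)) := by
    calc hkColength F (s+1) d q
        ≤ (∏ i, d i) * Ccol F (s+1) (fun i => q / d i + 1) :=
          hk_upper (s+1) d hdpos q _ (fun i => num_b (hdpos i))
      _ = (∏ i, d i) * Dcolength F s (fun i => q / d i + 1) := by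
          rw [Ccol_eq_Dcolength]
      _ ≤ (∏ i, d i) * Dcolength F s (fun i => p ^ t * (p / d i + 1)) := by
          refine Nat.mul_le_mul_left _ (Dcolength_mono s fun i => ?_)
          rw [hqt]
          exact num_d (hdpos i) hp.pos
      _ = (∏ i, d i) * (p ^ (t * s) * Dcolength F s (fun i => p / d i + 1)) := by
          rw [Dcolength_pow_mul]
  -- pass to the reals
  have hp0 : (0 : ℝ) < (p : ℝ) := by exact_mod_cast hp.pos
  have hps : (0 : ℝ) < (p : ℝ) ^ s := pow_pos hp0 s
  have hqs : (0 : ℝ) < ((p : ℝ) ^ n) ^ s := pow_pos (pow_pos hp0 n) s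
  have hsplit : ((p : ℝ) ^ n) ^ s = (p : ℝ) ^ (t * s) * (p : ℝ) ^ s := by
    rw [← pow_mul, ← pow_add]
    congr 1
    have : n = t + 1 := by omega
    rw [this]
    ring
  have hprod : (∏ i, (d i : ℝ)) = ((∏ i, d i : ℕ) : ℝ) := by
    rw [Nat.cast_prod]
  constructor
  · rw [div_le_div_iff₀ hps hqs, hsplit]
    have hcast : ((((∏ i, d i) * (p ^ (t * s) * Dcolength F s (fun i => p / d i))) : ℕ) : ℝ)
        ≤ ((hkColength F (s+1) d q : ℕ) : ℝ) := by exact_mod_cast lower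
    push_cast at hcast
    calc (∏ i, (d i : ℝ)) * (Dcolength F s (fun i => p / d i) : ℝ)
          * ((p : ℝ) ^ (t * s) * (p : ℝ) ^ s)
        = ((∏ i, (d i : ℝ)) * ((p:ℝ) ^ (t * s) * (Dcolength F s (fun i => p / d i) : ℝ)))
          * (p : ℝ) ^ s := by ring
      _ ≤ (hkColength F (s+1) d q : ℝ) * (p : ℝ) ^ s := by
          exact mul_le_mul_of_nonneg_right hcast hps.le
  · rw [div_le_div_iff₀ hqs hps, hsplit]
    have hcast : ((hkColength F (s+1) d q : ℕ) : ℝ)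
        ≤ ((((∏ i, d i) * (p ^ (t * s) * Dcolength F s (fun i => p / d i + 1))) : ℕ) : ℝ) := by
      exact_mod_cast upper
    push_cast at hcast
    calc (hkColength F (s+1) d q : ℝ) * (p : ℝ) ^ s
        ≤ ((∏ i, (d i : ℝ)) * ((p:ℝ) ^ (t * s) * (Dcolength F s (fun i => p / d i + 1) : ℝ)))
          * (p : ℝ) ^ s := by
          exact mul_le_mul_of_nonneg_right hcast hps.le
      _ = (∏ i, (d i : ℝ)) * (Dcolength F s (fun i => p / d i + 1) : ℝ)
          * ((p : ℝ) ^ (t * s) * (p : ℝ) ^ s) := by ring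
end

section
/- Let s ≥ 2 and d_1, …, d_s ≥ 2 be integers and let p be a prime with p > max_i d_i. If e_p is a real number such that dim_{F}(R_p/𝔪_p^{[p^n]})/p^{n(s−1)} converges to e_p as n → ∞, then d_1⋯d_s · D_{F}(⌊p/d_1⌋, …, ⌊p/d_s⌋)/p^{s−1} ≤ e_p ≤ d_1⋯d_s · D_{F}(⌊p/d_1⌋+1, …, ⌊p/d_s⌋+1)/p^{s−1}, where F = ℤ/pℤ. -/
open MvPolynomial Filter

set_option synthInstance.maxHeartbeats 1000000
set_option maxHeartbeats 1000000

namespace HMAux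

variable {F : Type} [Field F] {t : ℕ}

/-- exponent tuples below `e` -/
abbrev A (e : Fin t → ℕ) := ∀ i, Fin (e i)

noncomputable def aF {e : Fin t → ℕ} (a : A e) : Fin t →₀ ℕ :=
  Finsupp.equivFunOnFinite.symm fun i => (a i : ℕ)

noncomputable def emul (e : Fin t → ℕ) (m : Fin t →₀ ℕ) : Fin t →₀ ℕ :=
  Finsupp.equivFunOnFinite.symm fun i => e i * m i

noncomputable def ediv (e : Fin t → ℕ) (m : Fin t →₀ ℕ) : Fin t →₀ ℕ :=
  Finsupp.equivFunOnFinite.symm fun i => m i / e i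

noncomputable def emod (e : Fin t → ℕ) (m : Fin t →₀ ℕ) : Fin t →₀ ℕ :=
  Finsupp.equivFunOnFinite.symm fun i => m i % e i

@[simp] lemma aF_apply {e : Fin t → ℕ} (a : A e) (i) : aF a i = a i := rfl
@[simp] lemma emul_apply (e : Fin t → ℕ) (m) (i) : emul e m i = e i * m i := rfl
@[simp] lemma ediv_apply (e : Fin t → ℕ) (m) (i) : ediv e m i = m i / e i := rfl
@[simp] lemma emod_apply (e : Fin t → ℕ) (m) (i) : emod e m i = m i % e i := rfl

variable {e : Fin t → ℕ}

lemma aF_injective : Function.Injective (aF (e := e)) := by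
  intro a b h
  funext i
  exact Fin.ext (by rw [← aF_apply a i, ← aF_apply b i, h])

lemma emod_add_emul (x b : Fin t →₀ ℕ) : emod e (x + emul e b) = emod e x := by
  ext i; simp [Nat.add_mul_mod_self_left]

lemma ediv_add_emul (he : ∀ i, 0 < e i) (x b : Fin t →₀ ℕ) :
    ediv e (x + emul e b) = ediv e x + b := by
  ext i; simp [Nat.add_mul_div_left _ _ (he i), Finsupp.add_apply]

lemma emod_emul_add (x b : Fin t →₀ ℕ) : emod e (emul e b + x) = emod e x := by
  rw [add_comm]; exact emod_add_emul x b

lemma ediv_emul_add (he : ∀ i, 0 < e i) (x b : Fin t →₀ ℕ) :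
    ediv e (emul e b + x) = b + ediv e x := by
  rw [add_comm, ediv_add_emul he, add_comm]

lemma emod_aF (a : A e) : emod e (aF a) = aF a := by
  ext i; simp [Nat.mod_eq_of_lt (a i).isLt]

lemma ediv_aF (a : A e) : ediv e (aF a) = 0 := by
  ext i; simp [Nat.div_eq_of_lt (a i).isLt]

/-- the residue of `m` mod `e`, as an element of `A e`. -/
def mkA (he : ∀ i, 0 < e i) (m : Fin t →₀ ℕ) : A e :=
  fun i => ⟨m i % e i, Nat.mod_lt _ (he i)⟩

lemma aF_mkA (he : ∀ i, 0 < e i) (m : Fin t →₀ ℕ) : aF (mkA he m) = emod e m := by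
  ext i; rfl

lemma decomp (he : ∀ i, 0 < e i) (m : Fin t →₀ ℕ) :
    aF (mkA he m) + emul e (ediv e m) = m := by
  ext i; simpa [mkA] using Nat.mod_add_div (m i) (e i)

lemma emod_eq_aF_iff (he : ∀ i, 0 < e i) (m : Fin t →₀ ℕ) (a : A e) :
    emod e m = aF a ↔ a = mkA he m := by
  constructor
  · intro h; exact (aF_injective (by rw [aF_mkA he, h])).symm
  · rintro rfl; exact (aF_mkA he m).symm

/-- the substitution `X i ↦ X i ^ e i`. -/
noncomputable def subst (F : Type) [Field F] (e : Fin t → ℕ) :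
    MvPolynomial (Fin t) F →ₐ[F] MvPolynomial (Fin t) F :=
  aeval fun i => X i ^ e i

lemma subst_monomial (m : Fin t →₀ ℕ) (c : F) :
    subst F e (monomial m c) = monomial (emul e m) c := by
  rw [subst, aeval_monomial, monomial_eq]
  have h1 : (m.prod fun i k => ((X i : MvPolynomial (Fin t) F) ^ e i) ^ k)
      = ∏ i, (X i : MvPolynomial (Fin t) F) ^ (e i * m i) := by
    rw [Finsupp.prod_fintype]
    · exact Finset.prod_congr rfl fun i _ => by rw [pow_mul]
    · intro i; exact pow_zero _
  have h2 : ((emul e m).prod fun i k => (X i : MvPolynomial (Fin t) F) ^ k)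
      = ∏ i, (X i : MvPolynomial (Fin t) F) ^ (e i * m i) := by
    rw [Finsupp.prod_fintype]
    · exact Finset.prod_congr rfl fun i _ => by rw [emul_apply]
    · intro i; exact pow_zero _
  rw [h1, h2, MvPolynomial.algebraMap_eq]

/-- the `a`-th projection: `x^{aF a + e*b} ↦ x^b`, other monomials to `0`. -/
noncomputable def proj (e : Fin t → ℕ) (a : A e) :
    MvPolynomial (Fin t) F →ₗ[F] MvPolynomial (Fin t) F :=
  (basisMonomials (Fin t) F).constr F fun m =>
    if emod e m = aF a then monomial (ediv e m) (1 : F) else 0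

lemma proj_monomial (a : A e) (m : Fin t →₀ ℕ) (c : F) :
    proj e a (monomial m c) =
      if emod e m = aF a then monomial (ediv e m) c else 0 := by
  have hb : (basisMonomials (Fin t) F) m = monomial m 1 :=
    congrFun (coe_basisMonomials (Fin t) F) m
  have hc : monomial m c = c • (basisMonomials (Fin t) F) m := by
    rw [hb, MvPolynomial.smul_monomial, smul_eq_mul, mul_one]
  rw [hc, map_smul, proj, Module.Basis.constr_basis]
  split_ifs
  · rw [MvPolynomial.smul_monomial, smul_eq_mul, mul_one]
  · rw [smul_zero]


lemma proj_subst_mul (he : ∀ i, 0 < e i) (a : A e) (g x : MvPolynomial (Fin t) F) :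
    proj e a (subst F e g * x) = g * proj e a x := by
  induction g using MvPolynomial.induction_on' with
  | add p q hp hq => rw [map_add, add_mul, map_add, hp, hq, add_mul]
  | monomial b c =>
    induction x using MvPolynomial.induction_on' with
    | add p q hp hq => rw [mul_add, map_add, hp, hq, map_add, mul_add]
    | monomial m c' =>
      rw [subst_monomial, monomial_mul, proj_monomial, proj_monomial,
        emod_emul_add, ediv_emul_add he]
      split_ifs
      · rw [monomial_mul]
      · rw [mul_zero]

lemma proj_small_mul (he : ∀ i, 0 < e i) (a a' : A e) (x : MvPolynomial (Fin t) F) :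
    proj e a (monomial (aF a') 1 * x) =
      ∑ a₂ : A e, (if emod e (aF a' + aF a₂) = aF a then
          monomial (ediv e (aF a' + aF a₂)) (1 : F) else 0) * proj e a₂ x := by
  induction x using MvPolynomial.induction_on' with
  | add p q hp hq =>
      rw [mul_add, map_add, hp, hq, ← Finset.sum_add_distrib]
      exact Finset.sum_congr rfl fun a₂ _ => by rw [map_add, mul_add]
  | monomial m c =>
    rw [monomial_mul, one_mul, proj_monomial]
    have hsum : ∀ a₂ : A e,
        (if emod e (aF a' + aF a₂) = aF a then
          monomial (ediv e (aF a' + aF a₂)) (1 : F) else 0) * proj e a₂ (monomial m c)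
        = if a₂ = mkA he m then
            (if emod e (aF a' + aF (mkA he m)) = aF a then
              monomial (ediv e (aF a' + aF (mkA he m))) (1 : F) else 0) *
              monomial (ediv e m) c
          else 0 := by
      intro a₂
      rw [proj_monomial]
      simp only [emod_eq_aF_iff he]
      by_cases h : a₂ = mkA he m
      · subst h; simp
      · simp [h]
    rw [Finset.sum_congr rfl fun a₂ _ => hsum a₂, Finset.sum_ite_eq' Finset.univ,
      if_pos (Finset.mem_univ _)]
    have hm : aF a' + m = (aF a' + aF (mkA he m)) + emul e (ediv e m) := by
      rw [add_assoc, decomp he]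
    rw [hm, emod_add_emul, ediv_add_emul he]
    split_ifs
    · rw [monomial_mul, one_mul]
    · rw [zero_mul]

lemma decomp_monomial (he : ∀ i, 0 < e i) (m : Fin t →₀ ℕ) (c : F) :
    (monomial m c : MvPolynomial (Fin t) F) =
      C c * (monomial (aF (mkA he m)) 1 * subst F e (monomial (ediv e m) 1)) := by
  rw [subst_monomial, monomial_mul, one_mul, C_mul_monomial, mul_one, decomp he]

lemma sum_decomposition (he : ∀ i, 0 < e i) (f : MvPolynomial (Fin t) F) :
    ∑ a : A e, monomial (aF a) 1 * subst F e (proj e a f) = f := by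
  induction f using MvPolynomial.induction_on' with
  | add p q hp hq =>
      conv_rhs => rw [← hp, ← hq]
      rw [← Finset.sum_add_distrib]
      exact Finset.sum_congr rfl fun a _ => by rw [map_add, map_add, mul_add]
  | monomial m c =>
    have hterm : ∀ a : A e, monomial (aF a) 1 * subst F e (proj e a (monomial m c))
        = if a = mkA he m then monomial m c else 0 := by
      intro a
      rw [proj_monomial]
      simp only [emod_eq_aF_iff he]
      by_cases h : a = mkA he m
      · subst h
        rw [if_pos rfl, if_pos rfl, subst_monomial, monomial_mul, one_mul, decomp he]
      · simp [h]
    rw [Finset.sum_congr rfl fun a _ => hterm a, Finset.sum_ite_eq' Finset.univ,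
      if_pos (Finset.mem_univ _)]

lemma proj_monomial_subst (he : ∀ i, 0 < e i) (a a' : A e) (g : MvPolynomial (Fin t) F) :
    proj e a' (monomial (aF a) 1 * subst F e g) = if a = a' then g else 0 := by
  induction g using MvPolynomial.induction_on' with
  | add p q hp hq =>
      rw [map_add, mul_add, map_add, hp, hq]
      split_ifs <;> simp
  | monomial b c =>
      rw [subst_monomial, monomial_mul, one_mul, proj_monomial,
        emod_add_emul, ediv_add_emul he, emod_aF, ediv_aF, zero_add]
      by_cases h : a = a'
      · subst h; rw [if_pos rfl, if_pos rfl]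
      · rw [if_neg h, if_neg fun hh => h (aF_injective hh)]

lemma proj_sum (he : ∀ i, 0 < e i) (a' : A e) (f : A e → MvPolynomial (Fin t) F) :
    proj e a' (∑ a : A e, monomial (aF a) 1 * subst F e (f a)) = f a' := by
  rw [map_sum, Finset.sum_congr rfl fun a _ => proj_monomial_subst he a a' (f a),
    Finset.sum_ite_eq' Finset.univ, if_pos (Finset.mem_univ _)]

lemma proj_mem (he : ∀ i, 0 < e i) (G : Set (MvPolynomial (Fin t) F)) {x : MvPolynomial (Fin t) F}
    (hx : x ∈ Ideal.span (⇑(subst F e) '' G)) :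
    ∀ a : A e, proj e a x ∈ Ideal.span G := by
  induction hx using Submodule.span_induction with
  | mem y hy =>
      obtain ⟨g, hg, rfl⟩ := hy
      intro a
      rw [← mul_one (subst F e g), proj_subst_mul he]
      have h1 : (1 : MvPolynomial (Fin t) F) = monomial 0 1 := by
        rw [monomial_zero', C_1]
      rw [h1, proj_monomial]
      split_ifs
      · have h0 : ediv e 0 = (0 : Fin t →₀ ℕ) := by ext i; simp
        rw [h0, ← h1, mul_one]
        exact Ideal.subset_span hg
      · rw [mul_zero]; exact Submodule.zero_mem _
  | zero => intro a; rw [map_zero]; exact Submodule.zero_mem _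
  | add x y hx hy ihx ihy => intro a; rw [map_add]; exact add_mem (ihx a) (ihy a)
  | smul r x hx ih =>
      intro a
      rw [smul_eq_mul]
      have hr : r * x = ∑ m ∈ r.support, monomial m (coeff m r) * x := by
        rw [← Finset.sum_mul, ← r.as_sum]
      rw [hr, map_sum]
      refine Submodule.sum_mem _ fun m _ => ?_
      rw [decomp_monomial he m (coeff m r)]
      have harr : C (coeff m r) * (monomial (aF (mkA he m)) 1 *
            subst F e (monomial (ediv e m) 1)) * x
          = monomial (aF (mkA he m)) 1 *
            (subst F e (monomial (ediv e m) 1) * (C (coeff m r) * x)) := by ring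
      rw [harr, proj_small_mul he]
      refine Submodule.sum_mem _ fun a₂ _ => ?_
      rw [proj_subst_mul he]
      have hmem : proj e a₂ (C (coeff m r) * x) ∈ Ideal.span G := by
        rw [← MvPolynomial.smul_eq_C_mul, map_smul, MvPolynomial.smul_eq_C_mul]
        exact Ideal.mul_mem_left _ _ (ih a₂)
      split_ifs
      · exact Ideal.mul_mem_left _ _ (Ideal.mul_mem_left _ _ hmem)
      · rw [zero_mul]; exact Submodule.zero_mem _

lemma finrank_subst (e : Fin t → ℕ) (he : ∀ i, 0 < e i)
    (G : Set (MvPolynomial (Fin t) F))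
    [FiniteDimensional F (MvPolynomial (Fin t) F ⧸ Ideal.span G)] :
    Module.finrank F (MvPolynomial (Fin t) F ⧸ Ideal.span (⇑(subst F e) '' G)) =
      (∏ i, e i) * Module.finrank F (MvPolynomial (Fin t) F ⧸ Ideal.span G) := by
  classical
  let R := MvPolynomial (Fin t) F
  let J : Ideal R := Ideal.span G
  let Jm : Ideal R := Ideal.span (⇑(subst F e) '' G)
  have hmap : J.map (subst F e) = Jm := Ideal.map_span _ _
  have hmem : ∀ {j : R}, j ∈ J → subst F e j ∈ Jm := fun hj =>
    hmap ▸ Ideal.mem_map_of_mem _ hj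
  let Ψ0 : R →ₗ[F] (A e → R ⧸ J) :=
    LinearMap.pi fun a => (Ideal.Quotient.mkₐ F J).toLinearMap ∘ₗ proj e a
  have hker : Submodule.restrictScalars F Jm ≤ LinearMap.ker Ψ0 := by
    intro x hx
    rw [LinearMap.mem_ker]
    funext a
    have : proj e a x ∈ J := proj_mem he G hx a
    simpa [Ψ0] using Ideal.Quotient.eq_zero_iff_mem.mpr this
  let Ψ : (R ⧸ Jm) →ₗ[F] (A e → R ⧸ J) :=
    (Submodule.liftQ _ Ψ0 hker) ∘ₗ
      ((Submodule.Quotient.restrictScalarsEquiv F Jm).symm.toLinearMap)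
  have hΨ : ∀ f : R, Ψ (Ideal.Quotient.mk Jm f)
      = fun a => Ideal.Quotient.mk J (proj e a f) := fun f => rfl
  have hinj : Function.Injective Ψ := by
    have h0 : ∀ x, Ψ x = 0 → x = 0 := by
      intro x h
      obtain ⟨f, rfl⟩ := Ideal.Quotient.mk_surjective x
      rw [hΨ] at h
      have hf : ∀ a, proj e a f ∈ J := fun a =>
        Ideal.Quotient.eq_zero_iff_mem.mp (congrFun h a)
      rw [Ideal.Quotient.eq_zero_iff_mem, ← sum_decomposition he f]
      exact Submodule.sum_mem _ fun a _ => Ideal.mul_mem_left _ _ (hmem (hf a))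
    intro x y hxy
    have := h0 (x - y) (by rw [map_sub, hxy, sub_self])
    exact sub_eq_zero.mp this
  have hsurj : Function.Surjective Ψ := by
    intro g
    choose f hf using fun a => Ideal.Quotient.mk_surjective (g a)
    refine ⟨Ideal.Quotient.mk Jm (∑ a : A e, monomial (aF a) 1 * subst F e (f a)), ?_⟩
    rw [hΨ]
    funext a
    rw [proj_sum he, hf]
  have equiv : (R ⧸ Jm) ≃ₗ[F] (A e → R ⧸ J) := LinearEquiv.ofBijective Ψ ⟨hinj, hsurj⟩
  rw [equiv.finrank_eq, Module.finrank_pi_fintype, Finset.sum_const, Finset.card_univ,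
    smul_eq_mul]
  congr 1
  simp [A]

/-- finite dimensionality of quotients containing powers of all the variables. -/
lemma findim_quot (I : Ideal (MvPolynomial (Fin t) F)) (N : Fin t → ℕ)
    (h : ∀ i, (X i : MvPolynomial (Fin t) F) ^ N i ∈ I) :
    FiniteDimensional F (MvPolynomial (Fin t) F ⧸ I) := by
  classical
  set R := MvPolynomial (Fin t) F
  let S : Finset (R ⧸ I) := Finset.image
    (fun m : ∀ i, Fin (N i) => Ideal.Quotient.mk I
      (monomial (Finsupp.equivFunOnFinite.symm fun i => (m i : ℕ)) 1)) Finset.univ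
  have hmono : ∀ m : Fin t →₀ ℕ,
      Ideal.Quotient.mk I (monomial m 1) ∈ Submodule.span F (S : Set (R ⧸ I)) := by
    intro m
    by_cases hm : ∀ i, m i < N i
    · apply Submodule.subset_span
      refine Finset.mem_coe.mpr (Finset.mem_image.mpr ⟨fun i => ⟨m i, hm i⟩, Finset.mem_univ _, ?_⟩)
      congr 1
      ext i
      simp
    · push_neg at hm
      obtain ⟨i, hi⟩ := hm
      have hsum : Finsupp.single i (N i) + (m - Finsupp.single i (N i)) = m := by
        ext j
        rcases eq_or_ne j i with rfl | hj
        · simp [Nat.add_sub_cancel' hi]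
        · simp [Finsupp.single_apply, Ne.symm hj]
      have hdec : (monomial m (1 : F) : R) =
          (X i ^ N i) * monomial (m - Finsupp.single i (N i)) 1 := by
        rw [X_pow_eq_monomial, monomial_mul, mul_one, hsum]
      have : (monomial m (1 : F) : R) ∈ I := by
        rw [hdec]; exact Ideal.mul_mem_right _ _ (h i)
      rw [Ideal.Quotient.eq_zero_iff_mem.mpr this]
      exact Submodule.zero_mem _
  have hspan : ⊤ ≤ Submodule.span F (S : Set (R ⧸ I)) := by
    intro x _
    obtain ⟨f, rfl⟩ := Ideal.Quotient.mk_surjective x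
    have hf : (Ideal.Quotient.mk I f : R ⧸ I)
        = ∑ m ∈ f.support, Ideal.Quotient.mk I (monomial m (coeff m f)) := by
      rw [← map_sum, ← f.as_sum]
    rw [hf]
    refine Submodule.sum_mem _ fun m _ => ?_
    have : (monomial m (coeff m f) : R) = coeff m f • monomial m 1 := by
      rw [MvPolynomial.smul_monomial, smul_eq_mul, mul_one]
    rw [this, ← Ideal.Quotient.mkₐ_eq_mk F I, map_smul, Ideal.Quotient.mkₐ_eq_mk]
    exact Submodule.smul_mem _ _ (hmono m)
  exact ⟨⟨S, le_antisymm le_top hspan⟩⟩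

/-- monotonicity of finrank of the quotient. -/
lemma finrank_quot_mono {I I' : Ideal (MvPolynomial (Fin t) F)} (h : I ≤ I')
    [FiniteDimensional F (MvPolynomial (Fin t) F ⧸ I)] :
    Module.finrank F (MvPolynomial (Fin t) F ⧸ I') ≤
      Module.finrank F (MvPolynomial (Fin t) F ⧸ I) := by
  set R := MvPolynomial (Fin t) F
  have hker : Submodule.restrictScalars F I ≤
      LinearMap.ker (Ideal.Quotient.mkₐ F I').toLinearMap := by
    intro x hx
    simpa using Ideal.Quotient.eq_zero_iff_mem.mpr (h hx)
  let g : (R ⧸ I) →ₗ[F] (R ⧸ I') :=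
    (Submodule.liftQ _ _ hker) ∘ₗ
      ((Submodule.Quotient.restrictScalarsEquiv F I).symm.toLinearMap)
  have hsurj : Function.Surjective g := by
    intro y
    obtain ⟨f, rfl⟩ := Ideal.Quotient.mk_surjective y
    exact ⟨Ideal.Quotient.mk I f, rfl⟩
  have hle := LinearMap.finrank_range_le g
  rwa [LinearMap.range_eq_top.mpr hsurj, finrank_top] at hle

end HMAux

namespace HMAux

variable (F : Type) [Field F]

/-- elimination of the linear variable. -/
lemma finrank_elim (s : ℕ) (m : Fin (s+1) → ℕ) :
    Module.finrank F (MvPolynomial (Fin (s+1)) F ⧸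
      Ideal.span (insert (∑ i : Fin (s+1), (X i : MvPolynomial (Fin (s+1)) F))
        (Set.range fun i : Fin (s+1) => (X i : MvPolynomial (Fin (s+1)) F) ^ m i)))
    = Dcolength F s m := by
  classical
  set I1 : Ideal (MvPolynomial (Fin (s+1)) F) :=
    Ideal.span (insert (∑ i : Fin (s+1), (X i : MvPolynomial (Fin (s+1)) F))
      (Set.range fun i : Fin (s+1) => (X i : MvPolynomial (Fin (s+1)) F) ^ m i)) with hI1
  set I2 : Ideal (MvPolynomial (Fin s) F) :=
    Ideal.span (Set.range (fun i : Fin s =>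
        (X i : MvPolynomial (Fin s) F) ^ m i.castSucc) ∪
      {(∑ i : Fin s, (X i : MvPolynomial (Fin s) F)) ^ m (Fin.last s)}) with hI2
  have hXmem : ∀ i : Fin (s+1),
      (X i : MvPolynomial (Fin (s+1)) F) ^ m i ∈ I1 :=
    fun i => Ideal.subset_span (Set.mem_insert_iff.mpr (Or.inr ⟨i, rfl⟩))
  have hsummem : (∑ i : Fin (s+1), (X i : MvPolynomial (Fin (s+1)) F)) ∈ I1 :=
    Ideal.subset_span (Set.mem_insert _ _)
  have hXmem2 : ∀ j : Fin s,
      (X j : MvPolynomial (Fin s) F) ^ m j.castSucc ∈ I2 :=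
    fun j => Ideal.subset_span (Set.mem_union_left _ ⟨j, rfl⟩)
  have hSmem2 : (∑ i : Fin s, (X i : MvPolynomial (Fin s) F)) ^ m (Fin.last s) ∈ I2 :=
    Ideal.subset_span (Set.mem_union_right _ rfl)
  -- the forward map
  let v : Fin (s+1) → (MvPolynomial (Fin s) F ⧸ I2) :=
    fun i => Fin.lastCases (-(∑ j : Fin s, Ideal.Quotient.mk I2 (X j)))
      (fun j => Ideal.Quotient.mk I2 (X j)) i
  let φ : MvPolynomial (Fin (s+1)) F →ₐ[F] (MvPolynomial (Fin s) F ⧸ I2) := aeval v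
  have hφ : ∀ a ∈ I1, φ a = 0 := by
    intro a ha
    refine RingHom.mem_ker.mp (Ideal.span_le.mpr ?_ (hI1 ▸ ha))
    intro g hg
    rw [SetLike.mem_coe, RingHom.mem_ker]
    rcases Set.mem_insert_iff.mp hg with rfl | ⟨i, rfl⟩
    · show φ _ = 0
      rw [map_sum]
      have hterm : ∀ i : Fin (s+1), φ (X i) = v i := fun i => aeval_X v i
      rw [Finset.sum_congr rfl fun i _ => hterm i, Fin.sum_univ_castSucc]
      simp only [v, Fin.lastCases_castSucc, Fin.lastCases_last]
      exact add_neg_cancel _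
    · show φ _ = 0
      rw [map_pow, aeval_X]
      induction i using Fin.lastCases with
      | cast j =>
          simp only [v, Fin.lastCases_castSucc]
          rw [← map_pow, Ideal.Quotient.eq_zero_iff_mem]
          exact hXmem2 j
      | last =>
          simp only [v, Fin.lastCases_last]
          have h2 := neg_pow (∑ j : Fin s, Ideal.Quotient.mk I2 (X j)) (m (Fin.last s))
          rw [h2, ← map_sum, ← map_pow, Ideal.Quotient.eq_zero_iff_mem.mpr hSmem2, mul_zero]
  let φq := Ideal.Quotient.liftₐ I1 φ hφ
  -- the backward map
  let ψ : MvPolynomial (Fin s) F →ₐ[F] (MvPolynomial (Fin (s+1)) F ⧸ I1) :=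
    aeval fun j : Fin s => Ideal.Quotient.mk I1 (X j.castSucc)
  have hrel : Ideal.Quotient.mk I1 (∑ j : Fin s,
      (X j.castSucc : MvPolynomial (Fin (s+1)) F))
      = -(Ideal.Quotient.mk I1 (X (Fin.last s))) := by
    rw [← map_neg, Ideal.Quotient.eq]
    have : (∑ j : Fin s, (X j.castSucc : MvPolynomial (Fin (s+1)) F)) - (-(X (Fin.last s)))
        = ∑ i : Fin (s+1), (X i : MvPolynomial (Fin (s+1)) F) := by
      rw [sub_neg_eq_add, Fin.sum_univ_castSucc]
    rw [this]
    exact hsummem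
  have hψ : ∀ a ∈ I2, ψ a = 0 := by
    intro a ha
    refine RingHom.mem_ker.mp (Ideal.span_le.mpr ?_ (hI2 ▸ ha))
    intro g hg
    rw [SetLike.mem_coe, RingHom.mem_ker]
    rcases (Set.mem_union _ _ _).mp hg with ⟨j, rfl⟩ | rfl
    · show ψ _ = 0
      rw [map_pow, aeval_X, ← map_pow, Ideal.Quotient.eq_zero_iff_mem]
      exact hXmem j.castSucc
    · show ψ _ = 0
      rw [map_pow, map_sum]
      have : ∀ j : Fin s, ψ (X j) = Ideal.Quotient.mk I1 (X j.castSucc) :=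
        fun j => aeval_X _ j
      have h2 := neg_pow (Ideal.Quotient.mk I1 (X (Fin.last s))) (m (Fin.last s))
      rw [Finset.sum_congr rfl fun j _ => this j, ← map_sum, hrel, h2, ← map_pow,
        Ideal.Quotient.eq_zero_iff_mem.mpr (hXmem (Fin.last s)), mul_zero]
  let ψq := Ideal.Quotient.liftₐ I2 ψ hψ
  -- they are inverse to each other
  have h1 : φq.comp ψq = AlgHom.id F (MvPolynomial (Fin s) F ⧸ I2) := by
    apply Ideal.Quotient.algHom_ext
    apply MvPolynomial.algHom_ext
    intro j
    show φq (ψq (Ideal.Quotient.mk I2 (X j))) = Ideal.Quotient.mk I2 (X j)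
    have e1 : ψq (Ideal.Quotient.mk I2 (X j)) = Ideal.Quotient.mk I1 (X j.castSucc) := by
      show Ideal.Quotient.liftₐ I2 ψ hψ (Ideal.Quotient.mk I2 (X j)) = _
      rw [Ideal.Quotient.liftₐ_apply]
      show ψ (X j) = _
      rw [aeval_X]
    rw [e1]
    show φ (X j.castSucc) = _
    rw [aeval_X]
    simp only [v, Fin.lastCases_castSucc]
  have h2 : ψq.comp φq = AlgHom.id F (MvPolynomial (Fin (s+1)) F ⧸ I1) := by
    apply Ideal.Quotient.algHom_ext
    apply MvPolynomial.algHom_ext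
    intro i
    show ψq (φq (Ideal.Quotient.mk I1 (X i))) = Ideal.Quotient.mk I1 (X i)
    have e1 : φq (Ideal.Quotient.mk I1 (X i)) = v i := by
      show Ideal.Quotient.liftₐ I1 φ hφ (Ideal.Quotient.mk I1 (X i)) = _
      rw [Ideal.Quotient.liftₐ_apply]
      show φ (X i) = _
      rw [aeval_X]
    rw [e1]
    induction i using Fin.lastCases with
    | cast j =>
        simp only [v, Fin.lastCases_castSucc]
        show ψ (X j) = _
        rw [aeval_X]
    | last =>
        simp only [v, Fin.lastCases_last]
        rw [map_neg, map_sum]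
        have : ∀ j : Fin s, ψq (Ideal.Quotient.mk I2 (X j))
            = Ideal.Quotient.mk I1 (X j.castSucc) := by
          intro j
          show Ideal.Quotient.liftₐ I2 ψ hψ (Ideal.Quotient.mk I2 (X j)) = _
          rw [Ideal.Quotient.liftₐ_apply]
          show ψ (X j) = _
          rw [aeval_X]
        rw [Finset.sum_congr rfl fun j _ => this j, ← map_sum, hrel, neg_neg]
  let equiv : (MvPolynomial (Fin (s+1)) F ⧸ I1) ≃ₐ[F] (MvPolynomial (Fin s) F ⧸ I2) :=
    AlgEquiv.ofAlgHom φq ψq h1 h2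
  exact equiv.toLinearEquiv.finrank_eq


/-- the diagonal-hypersurface colength in terms of `Dcolength`. -/
lemma finrank_diag (sp : ℕ) (dd mm : Fin (sp+1) → ℕ) (hd : ∀ i, 0 < dd i) :
    Module.finrank F (MvPolynomial (Fin (sp+1)) F ⧸ Ideal.span
      (insert (∑ i : Fin (sp+1), (X i : MvPolynomial (Fin (sp+1)) F) ^ dd i)
        (Set.range fun i : Fin (sp+1) =>
          (X i : MvPolynomial (Fin (sp+1)) F) ^ (dd i * mm i))))
    = (∏ i, dd i) * Dcolength F sp mm := by
  classical
  haveI : FiniteDimensional F (MvPolynomial (Fin (sp+1)) F ⧸ Ideal.span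
      (insert (∑ i : Fin (sp+1), (X i : MvPolynomial (Fin (sp+1)) F))
        (Set.range fun i : Fin (sp+1) => (X i : MvPolynomial (Fin (sp+1)) F) ^ mm i))) :=
    findim_quot _ mm fun i =>
      Ideal.subset_span (Set.mem_insert_iff.mpr (Or.inr ⟨i, rfl⟩))
  have himg : ⇑(subst F dd) ''
      (insert (∑ i : Fin (sp+1), (X i : MvPolynomial (Fin (sp+1)) F))
        (Set.range fun i : Fin (sp+1) => (X i : MvPolynomial (Fin (sp+1)) F) ^ mm i))
      = insert (∑ i : Fin (sp+1), (X i : MvPolynomial (Fin (sp+1)) F) ^ dd i)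
        (Set.range fun i : Fin (sp+1) =>
          (X i : MvPolynomial (Fin (sp+1)) F) ^ (dd i * mm i)) := by
    rw [Set.image_insert_eq, ← Set.range_comp]
    congr 1
    · rw [map_sum]
      exact Finset.sum_congr rfl fun i _ => by rw [subst, aeval_X]
    · refine congrArg Set.range (funext fun i => ?_)
      show subst F dd (X i ^ mm i) = _
      rw [map_pow, subst, aeval_X, ← pow_mul]
  rw [← himg, finrank_subst dd hd _, finrank_elim]

/-- Frobenius scaling of `Dcolength` in characteristic `p`. -/
lemma Dcolength_mul_prime (p : ℕ) (hp : p.Prime) [CharP F p] (sp : ℕ)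
    (k : Fin (sp+1) → ℕ) :
    Dcolength F sp (fun i => p * k i) = p ^ sp * Dcolength F sp k := by
  classical
  haveI : Fact p.Prime := ⟨hp⟩
  haveI : FiniteDimensional F (MvPolynomial (Fin sp) F ⧸ Ideal.span
      (Set.range (fun i : Fin sp =>
        (X i : MvPolynomial (Fin sp) F) ^ k i.castSucc) ∪
      {(∑ i : Fin sp, (X i : MvPolynomial (Fin sp) F)) ^ k (Fin.last sp)})) :=
    findim_quot _ (fun i => k i.castSucc) fun i =>
      Ideal.subset_span (Set.mem_union_left _ ⟨i, rfl⟩)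
  have himg : ⇑(subst F (fun _ : Fin sp => p)) ''
      (Set.range (fun i : Fin sp =>
        (X i : MvPolynomial (Fin sp) F) ^ k i.castSucc) ∪
      {(∑ i : Fin sp, (X i : MvPolynomial (Fin sp) F)) ^ k (Fin.last sp)})
      = Set.range (fun i : Fin sp =>
        (X i : MvPolynomial (Fin sp) F) ^ ((fun i => p * k i) i.castSucc)) ∪
      {(∑ i : Fin sp, (X i : MvPolynomial (Fin sp) F)) ^ ((fun i => p * k i) (Fin.last sp))} := by
    rw [Set.image_union, Set.image_singleton, ← Set.range_comp]
    congr 1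
    · refine congrArg Set.range (funext fun i => ?_)
      show subst F _ (X i ^ k i.castSucc) = _
      rw [map_pow, subst, aeval_X, ← pow_mul]
    · congr 1
      rw [map_pow, map_sum]
      have hX : ∀ i : Fin sp, subst F (fun _ : Fin sp => p) (X i)
          = (X i : MvPolynomial (Fin sp) F) ^ p := fun i => by rw [subst, aeval_X]
      rw [Finset.sum_congr rfl fun i _ => hX i, ← sum_pow_char, ← pow_mul]
  show Module.finrank F _ = _
  rw [Dcolength, ← himg, finrank_subst _ (fun _ => hp.pos) _]
  congr 1
  rw [Finset.prod_const, Finset.card_univ, Fintype.card_fin]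

lemma Dcolength_pow_prime (p : ℕ) (hp : p.Prime) [CharP F p] (sp : ℕ)
    (k : Fin (sp+1) → ℕ) (j : ℕ) :
    Dcolength F sp (fun i => p ^ j * k i) = p ^ (j * sp) * Dcolength F sp k := by
  induction j with
  | zero => simp
  | succ j ih =>
      have h1 : (fun i => p ^ (j+1) * k i) = fun i => p * ((fun i => p ^ j * k i) i) := by
        funext i; ring
      rw [h1, Dcolength_mul_prime F p hp sp _, ih]
      ring

/-- monotonicity of `Dcolength`. -/
lemma Dcolength_mono (sp : ℕ) {k k' : Fin (sp+1) → ℕ} (h : ∀ i, k i ≤ k' i) :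
    Dcolength F sp k ≤ Dcolength F sp k' := by
  classical
  haveI : FiniteDimensional F (MvPolynomial (Fin sp) F ⧸ Ideal.span
      (Set.range (fun i : Fin sp =>
        (X i : MvPolynomial (Fin sp) F) ^ k' i.castSucc) ∪
      {(∑ i : Fin sp, (X i : MvPolynomial (Fin sp) F)) ^ k' (Fin.last sp)})) :=
    findim_quot _ (fun i => k' i.castSucc) fun i =>
      Ideal.subset_span (Set.mem_union_left _ ⟨i, rfl⟩)
  apply finrank_quot_mono
  rw [Ideal.span_le]
  intro g hg
  rcases (Set.mem_union _ _ _).mp hg with ⟨i, rfl⟩ | rfl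
  · show (X i : MvPolynomial (Fin sp) F) ^ k' i.castSucc ∈ _
    rw [show k' i.castSucc = k i.castSucc + (k' i.castSucc - k i.castSucc) from
      (Nat.add_sub_cancel' (h i.castSucc)).symm, pow_add]
    exact Ideal.mul_mem_right _ _
      (Ideal.subset_span (Set.mem_union_left _ ⟨i, rfl⟩))
  · show (∑ i : Fin sp, (X i : MvPolynomial (Fin sp) F)) ^ k' (Fin.last sp) ∈ _
    rw [show k' (Fin.last sp) = k (Fin.last sp) + (k' (Fin.last sp) - k (Fin.last sp)) from
      (Nat.add_sub_cancel' (h (Fin.last sp))).symm, pow_add]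
    exact Ideal.mul_mem_right _ _
      (Ideal.subset_span (Set.mem_union_right _ rfl))

/-- monotonicity of colengths of quotients by `f` and powers of variables. -/
lemma L_mono {tt : ℕ} (f : MvPolynomial (Fin tt) F) {c c' : Fin tt → ℕ}
    (h : ∀ i, c i ≤ c' i) :
    Module.finrank F (MvPolynomial (Fin tt) F ⧸ Ideal.span
      (insert f (Set.range fun i : Fin tt => (X i : MvPolynomial (Fin tt) F) ^ c i)))
    ≤ Module.finrank F (MvPolynomial (Fin tt) F ⧸ Ideal.span
      (insert f (Set.range fun i : Fin tt => (X i : MvPolynomial (Fin tt) F) ^ c' i))) := by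
  classical
  haveI : FiniteDimensional F (MvPolynomial (Fin tt) F ⧸ Ideal.span
      (insert f (Set.range fun i : Fin tt => (X i : MvPolynomial (Fin tt) F) ^ c' i))) :=
    findim_quot _ c' fun i =>
      Ideal.subset_span (Set.mem_insert_iff.mpr (Or.inr ⟨i, rfl⟩))
  apply finrank_quot_mono
  rw [Ideal.span_le]
  intro g hg
  rcases Set.mem_insert_iff.mp hg with rfl | ⟨i, rfl⟩
  · exact Ideal.subset_span (Set.mem_insert _ _)
  · show (X i : MvPolynomial (Fin tt) F) ^ c' i ∈ _
    rw [show c' i = c i + (c' i - c i) from (Nat.add_sub_cancel' (h i)).symm, pow_add]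
    exact Ideal.mul_mem_right _ _
      (Ideal.subset_span (Set.mem_insert_iff.mpr (Or.inr ⟨i, rfl⟩)))

end HMAux

/-- If for a fixed prime `p > max d_i` the Hilbert-Kunz limit `e_p` exists for the
diagonal hypersurface, then it is squeezed between the two Han-Monsky `D`-terms. -/
theorem statement1 (s : ℕ) (hs : 1 ≤ s) (d : Fin (s+1) → ℕ) (hd : ∀ i, 2 ≤ d i)
    (p : ℕ) (hp : p.Prime) (hpd : ∀ i, d i < p) (e : ℝ)
    (he : Filter.Tendsto
      (fun n : ℕ => (hkColength (ZMod p) (s+1) d (p ^ n) : ℝ) / ((p : ℝ) ^ n) ^ s)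
      Filter.atTop (nhds e)) :
    (∏ i, (d i : ℝ)) * (Dcolength (ZMod p) s (fun i => p / d i) : ℝ) / (p : ℝ) ^ s ≤ e ∧
      e ≤ (∏ i, (d i : ℝ)) * (Dcolength (ZMod p) s (fun i => p / d i + 1) : ℝ) / (p : ℝ) ^ s := by
  haveI : Fact p.Prime := ⟨hp⟩
  have hd0 : ∀ i, 0 < d i := fun i => lt_of_lt_of_le two_pos (hd i)
  have hp0 : 0 < p := hp.pos
  -- natural-number lower bound, for q = p^(m+1)
  have LB : ∀ m : ℕ,
      (∏ i, d i) * (p ^ (m*s) * Dcolength (ZMod p) s (fun i => p / d i))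
        ≤ hkColength (ZMod p) (s+1) d (p ^ (m+1)) := by
    intro m
    have h1 : Dcolength (ZMod p) s (fun i => p ^ m * (p / d i))
        = p ^ (m*s) * Dcolength (ZMod p) s (fun i => p / d i) :=
      HMAux.Dcolength_pow_prime (ZMod p) p hp s _ m
    have h2 : ∀ i : Fin (s+1), p ^ m * (p / d i) ≤ p ^ (m+1) / d i := by
      intro i
      rw [Nat.le_div_iff_mul_le (hd0 i)]
      calc p ^ m * (p / d i) * d i = p ^ m * (p / d i * d i) := by ring
        _ ≤ p ^ m * p := Nat.mul_le_mul_left _ (Nat.div_mul_le_self p (d i))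
        _ = p ^ (m+1) := (pow_succ p m).symm
    have h3 := HMAux.Dcolength_mono (ZMod p) s h2
    have h4 := HMAux.finrank_diag (ZMod p) s d (fun i => p ^ (m+1) / d i) hd0
    have h5 : ∀ i : Fin (s+1), d i * (p ^ (m+1) / d i) ≤ p ^ (m+1) := by
      intro i; rw [mul_comm]; exact Nat.div_mul_le_self _ _
    have h6 := HMAux.L_mono (ZMod p)
      (∑ i : Fin (s+1), (X i : MvPolynomial (Fin (s+1)) (ZMod p)) ^ d i) h5
    calc (∏ i, d i) * (p ^ (m*s) * Dcolength (ZMod p) s (fun i => p / d i))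
        = (∏ i, d i) * Dcolength (ZMod p) s (fun i => p ^ m * (p / d i)) := by rw [h1]
      _ ≤ (∏ i, d i) * Dcolength (ZMod p) s (fun i => p ^ (m+1) / d i) :=
          Nat.mul_le_mul_left _ h3
      _ = _ := h4.symm
      _ ≤ hkColength (ZMod p) (s+1) d (p ^ (m+1)) := h6
  -- natural-number upper bound, for q = p^(m+1)
  have hq : ∀ (q : ℕ) (i : Fin (s+1)), q < d i * (q / d i + 1) := by
    intro q i
    calc q = d i * (q / d i) + q % d i := (Nat.div_add_mod q (d i)).symm
      _ < d i * (q / d i) + d i := Nat.add_lt_add_left (Nat.mod_lt q (hd0 i)) _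
      _ = d i * (q / d i + 1) := by ring
  have UB : ∀ m : ℕ,
      hkColength (ZMod p) (s+1) d (p ^ (m+1))
        ≤ (∏ i, d i) * (p ^ (m*s) * Dcolength (ZMod p) s (fun i => p / d i + 1)) := by
    intro m
    have h6 := HMAux.L_mono (ZMod p)
      (∑ i : Fin (s+1), (X i : MvPolynomial (Fin (s+1)) (ZMod p)) ^ d i)
      (c := fun _ => p ^ (m+1)) (c' := fun i => d i * (p ^ (m+1) / d i + 1))
      (fun i => le_of_lt (hq _ i))
    have h4 := HMAux.finrank_diag (ZMod p) s d (fun i => p ^ (m+1) / d i + 1) hd0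
    have h2 : ∀ i : Fin (s+1), p ^ (m+1) / d i + 1 ≤ p ^ m * (p / d i + 1) := by
      intro i
      have h1' : p ^ (m+1) / d i < p ^ m * (p / d i + 1) := by
        rw [Nat.div_lt_iff_lt_mul (hd0 i)]
        calc p ^ (m+1) = p ^ m * p := pow_succ p m
          _ < p ^ m * (d i * (p / d i + 1)) :=
              mul_lt_mul_of_pos_left (hq p i) (pow_pos hp0 m)
          _ = (p ^ m * (p / d i + 1)) * d i := by ring
      exact Nat.succ_le_of_lt h1'
    have h3 := HMAux.Dcolength_mono (ZMod p) s h2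
    have h1 :=
      HMAux.Dcolength_pow_prime (ZMod p) p hp s (fun i => p / d i + 1) m
    calc hkColength (ZMod p) (s+1) d (p ^ (m+1))
        ≤ Module.finrank (ZMod p) (MvPolynomial (Fin (s+1)) (ZMod p) ⧸ Ideal.span
            (insert (∑ i : Fin (s+1), (X i : MvPolynomial (Fin (s+1)) (ZMod p)) ^ d i)
              (Set.range fun i : Fin (s+1) =>
                (X i : MvPolynomial (Fin (s+1)) (ZMod p)) ^ (d i * (p ^ (m+1) / d i + 1))))) := h6
      _ = (∏ i, d i) * Dcolength (ZMod p) s (fun i => p ^ (m+1) / d i + 1) := h4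
      _ ≤ (∏ i, d i) * Dcolength (ZMod p) s (fun i => p ^ m * (p / d i + 1)) :=
          Nat.mul_le_mul_left _ h3
      _ = (∏ i, d i) * (p ^ (m*s) * Dcolength (ZMod p) s (fun i => p / d i + 1)) := by rw [h1]
  -- pass to the limit
  have hcast : ∀ m : ℕ, ((p:ℝ) ^ (m+1)) ^ s = (p:ℝ) ^ (m*s) * (p:ℝ) ^ s := by
    intro m; rw [← pow_mul, ← pow_add]; congr 1; ring
  have hppos : (0:ℝ) < (p:ℝ) ^ s := by positivity
  have hprealpos : (0:ℝ) < (p:ℝ) := by exact_mod_cast hp0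
  constructor
  · refine ge_of_tendsto he ?_
    refine Filter.eventually_atTop.mpr ⟨1, fun n hn => ?_⟩
    obtain ⟨m, rfl⟩ : ∃ m, n = m + 1 := ⟨n - 1, (Nat.succ_pred_eq_of_pos hn).symm⟩
    have hreal : ((∏ i, d i : ℕ) : ℝ) *
        ((p:ℝ) ^ (m*s) * (Dcolength (ZMod p) s (fun i => p / d i) : ℝ))
        ≤ (hkColength (ZMod p) (s+1) d (p ^ (m+1)) : ℝ) := by exact_mod_cast LB m
    rw [div_le_div_iff₀ hppos (by positivity)]
    calc (∏ i, (d i : ℝ)) * (Dcolength (ZMod p) s (fun i => p / d i) : ℝ) *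
          ((p:ℝ) ^ (m+1)) ^ s
        = ((∏ i, d i : ℕ) : ℝ) *
            ((p:ℝ) ^ (m*s) * (Dcolength (ZMod p) s (fun i => p / d i) : ℝ)) * (p:ℝ) ^ s := by
          rw [hcast m]; push_cast; ring
      _ ≤ (hkColength (ZMod p) (s+1) d (p ^ (m+1)) : ℝ) * (p:ℝ) ^ s :=
          mul_le_mul_of_nonneg_right hreal (le_of_lt hppos)
  · refine le_of_tendsto he ?_
    refine Filter.eventually_atTop.mpr ⟨1, fun n hn => ?_⟩
    obtain ⟨m, rfl⟩ : ∃ m, n = m + 1 := ⟨n - 1, (Nat.succ_pred_eq_of_pos hn).symm⟩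
    have hreal : (hkColength (ZMod p) (s+1) d (p ^ (m+1)) : ℝ)
        ≤ ((∏ i, d i : ℕ) : ℝ) *
          ((p:ℝ) ^ (m*s) * (Dcolength (ZMod p) s (fun i => p / d i + 1) : ℝ)) := by
      exact_mod_cast UB m
    rw [div_le_div_iff₀ (by positivity) hppos]
    calc (hkColength (ZMod p) (s+1) d (p ^ (m+1)) : ℝ) * (p:ℝ) ^ s
        ≤ ((∏ i, d i : ℕ) : ℝ) *
            ((p:ℝ) ^ (m*s) * (Dcolength (ZMod p) s (fun i => p / d i + 1) : ℝ)) * (p:ℝ) ^ s :=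
          mul_le_mul_of_nonneg_right hreal (le_of_lt hppos)
      _ = (∏ i, (d i : ℝ)) * (Dcolength (ZMod p) s (fun i => p / d i + 1) : ℝ) *
            ((p:ℝ) ^ (m+1)) ^ s := by
          rw [hcast m]; push_cast; ring
end

section
/- Let p be an odd prime and let q = p^n for an integer n ≥ 0. Then dim_{ℤ/pℤ} (ℤ/pℤ)[x, y]/(x^{2q}, y^{2q}, (x+y)^{2q}) = 3q². -/
open MvPolynomial Filter

/-- Dimension of the quotient of `F[x₀,x₁]` by a monomial ideal is the number of
"standard" monomials. -/
theorem aux_finrank_quot_monomial (F : Type) [Field F] (S : Set (Fin 2 →₀ ℕ))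
    (G : Set (Fin 2 →₀ ℕ)) [Fintype G]
    (hSG : ∀ m, (∃ s ∈ S, s ≤ m) ↔ m ∉ G) :
    Module.finrank F (MvPolynomial (Fin 2) F ⧸
      Ideal.span ((fun s => monomial s (1:F)) '' S)) = Fintype.card G := by
  classical
  set P := MvPolynomial (Fin 2) F with hP
  set J := Ideal.span ((fun s => monomial s (1:F)) '' S) with hJ
  let b := MvPolynomial.basisMonomials (Fin 2) F
  let φ : P →ₗ[F] (G →₀ F) :=
    (Finsupp.lsubtypeDomain (R := F) G).comp (b.repr : P ≃ₗ[F] _).toLinearMap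
  have hφ : ∀ (f : P), φ f = Finsupp.subtypeDomain (· ∈ G) (b.repr f) := fun f => rfl
  have hrepr : ∀ (f : P) (m : Fin 2 →₀ ℕ), b.repr f m = MvPolynomial.coeff m f :=
    fun _ _ => rfl
  have hker : LinearMap.ker φ = J.restrictScalars F := by
    ext f
    rw [LinearMap.mem_ker, hφ, Finsupp.subtypeDomain_eq_zero_iff',
      Submodule.restrictScalars_mem,
      show (f ∈ J) ↔ _ from MvPolynomial.mem_ideal_span_monomial_image]
    constructor
    · intro h m hm
      rw [hSG]
      intro hG
      have h0 := h m hG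
      rw [hrepr] at h0
      exact (MvPolynomial.mem_support_iff.mp hm) h0
    · intro h m hmG
      rw [hrepr]
      by_contra hne
      exact (hSG m).mp (h m (MvPolynomial.mem_support_iff.mpr hne)) hmG
  have hsurj : Function.Surjective φ := by
    intro y
    refine ⟨b.repr.symm y.extendDomain, ?_⟩
    rw [hφ]
    simp [Finsupp.subtypeDomain_extendDomain]
  calc Module.finrank F (P ⧸ J)
      = Module.finrank F (P ⧸ J.restrictScalars F) :=
        (Submodule.Quotient.restrictScalarsEquiv F J).finrank_eq.symm
    _ = Module.finrank F (P ⧸ LinearMap.ker φ) := by rw [hker]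
    _ = Module.finrank F ((G : Set (Fin 2 →₀ ℕ)) →₀ F) :=
        (φ.quotKerEquivOfSurjective hsurj).finrank_eq
    _ = Fintype.card G := Module.finrank_finsupp_self F

/-- For an odd prime `p` and `q = p^n`,
`dim_{ℤ/pℤ} (ℤ/pℤ)[x,y]/(x^{2q}, y^{2q}, (x+y)^{2q}) = 3q²`. -/
theorem statement11 (p : ℕ) (hp : p.Prime) (hodd : Odd p) (n : ℕ) :
    Dcolength (ZMod p) 2 ![2 * p ^ n, 2 * p ^ n, 2 * p ^ n] = 3 * (p ^ n) ^ 2 := by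
  classical
  haveI : Fact p.Prime := ⟨hp⟩
  set q := p ^ n with hqdef
  have hq1 : 1 ≤ q := Nat.one_le_pow _ _ hp.pos
  set F := ZMod p with hF
  set S : Set (Fin 2 →₀ ℕ) :=
    {Finsupp.single 0 (2*q), Finsupp.single 1 (2*q),
      Finsupp.single 0 q + Finsupp.single 1 q} with hS
  set G : Set (Fin 2 →₀ ℕ) :=
    {m | m 0 < 2*q ∧ m 1 < 2*q ∧ (m 0 < q ∨ m 1 < q)} with hG
  have hSG : ∀ m : Fin 2 →₀ ℕ, (∃ s ∈ S, s ≤ m) ↔ m ∉ G := by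
    intro m
    have h0 : (Finsupp.single (0:Fin 2) (2*q) ≤ m) ↔ 2*q ≤ m 0 := Finsupp.single_le_iff
    have h1 : (Finsupp.single (1:Fin 2) (2*q) ≤ m) ↔ 2*q ≤ m 1 := Finsupp.single_le_iff
    have h2 : (Finsupp.single (0:Fin 2) q + Finsupp.single 1 q ≤ m) ↔
        q ≤ m 0 ∧ q ≤ m 1 := by
      constructor
      · intro h
        have ha := h 0
        have hb := h 1
        simp [Finsupp.single_apply] at ha hb
        exact ⟨ha, hb⟩
      · intro h i
        fin_cases i <;> simp [Finsupp.single_apply] <;> omega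
    constructor
    · rintro ⟨s, hs, hle⟩ hmG
      rw [hG] at hmG
      simp only [Set.mem_setOf_eq] at hmG
      rw [hS] at hs
      simp only [Set.mem_insert_iff, Set.mem_singleton_iff] at hs
      rcases hs with rfl | rfl | rfl
      · rw [h0] at hle; omega
      · rw [h1] at hle; omega
      · rw [h2] at hle; omega
    · intro hmG
      rw [hG] at hmG
      simp only [Set.mem_setOf_eq, not_and_or, not_or, not_lt] at hmG
      rcases hmG with h | h | h
      · exact ⟨_, by simp [hS], h0.mpr h⟩
      · exact ⟨_, by simp [hS], h1.mpr h⟩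
      · exact ⟨_, by simp [hS], h2.mpr ⟨h.1, h.2⟩⟩
  -- Finiteness of G and its cardinality
  let E : (Fin 2 →₀ ℕ) ≃ (ℕ × ℕ) :=
    Finsupp.equivFunOnFinite.trans (piFinTwoEquiv fun _ => ℕ)
  have hE : ∀ m : Fin 2 →₀ ℕ, E m = (m 0, m 1) := fun m => rfl
  set T : Finset (ℕ × ℕ) :=
    (Finset.range (2*q) ×ˢ Finset.range (2*q)) \
      (Finset.Ico q (2*q) ×ˢ Finset.Ico q (2*q)) with hT
  have hmemT : ∀ m : Fin 2 →₀ ℕ, m ∈ G ↔ E m ∈ T := by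
    intro m
    rw [hE, hG, hT]
    simp only [Set.mem_setOf_eq, Finset.mem_sdiff, Finset.mem_product, Finset.mem_range,
      Finset.mem_Ico]
    omega
  let eG : {m : Fin 2 →₀ ℕ // m ∈ G} ≃ {x : ℕ × ℕ // x ∈ T} := Equiv.subtypeEquiv E hmemT
  haveI : Fintype ↥G := Fintype.ofEquiv _ eG.symm
  have hcardG : Fintype.card ↥G = T.card := by
    rw [Fintype.card_congr eG, Fintype.card_coe]
  have hcardT : T.card = 3 * q ^ 2 := by
    have hsub : Finset.Ico q (2*q) ×ˢ Finset.Ico q (2*q) ⊆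
        Finset.range (2*q) ×ˢ Finset.range (2*q) := by
      intro x hx
      simp only [Finset.mem_product, Finset.mem_Ico, Finset.mem_range] at *
      omega
    rw [hT, Finset.card_sdiff_of_subset hsub, Finset.card_product, Finset.card_product,
      Finset.card_range, Nat.card_Ico]
    have h5 : 2*q - q = q := by omega
    rw [h5]
    have h4 : 2*q*(2*q) = 4*(q*q) := by ring
    have h3 : 3 * q ^ 2 = 3*(q*q) := by ring
    rw [h4, h3]
    omega
  -- the ideal in the definition equals the monomial ideal
  set P := MvPolynomial (Fin 2) F with hP
  have hXsum : (X 0 + X 1 : P) ^ q = X 0 ^ q + X 1 ^ q := by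
    rw [hqdef]
    exact add_pow_char_pow _ _ p n
  have hmain : (X 0 + X 1 : P) ^ (2*q) =
      X 0 ^ (2*q) + X 1 ^ (2*q) + 2 * (X 0 ^ q * X 1 ^ q) := by
    rw [mul_comm 2 q, pow_mul, pow_mul, pow_mul, hXsum]
    ring
  set J := Ideal.span ((fun s => monomial s (1:F)) '' S) with hJ
  have hx0 : (X 0 : P) ^ (2*q) ∈ J :=
    Ideal.subset_span ⟨Finsupp.single 0 (2*q), by simp [hS], X_pow_eq_monomial.symm⟩
  have hx1 : (X 1 : P) ^ (2*q) ∈ J :=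
    Ideal.subset_span ⟨Finsupp.single 1 (2*q), by simp [hS], X_pow_eq_monomial.symm⟩
  have hxy : (X 0 : P) ^ q * X 1 ^ q ∈ J := by
    refine Ideal.subset_span ⟨Finsupp.single 0 q + Finsupp.single 1 q, by simp [hS], ?_⟩
    rw [X_pow_eq_monomial, X_pow_eq_monomial, monomial_mul, mul_one]
  have h2ne : (2 : F) ≠ 0 := by
    have hnd : ¬ (p ∣ 2) := by
      intro hdvd
      have := (Nat.prime_dvd_prime_iff_eq hp Nat.prime_two).mp hdvd
      rw [Nat.odd_iff] at hodd
      omega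
    have h2 : ((2:ℕ) : ZMod p) ≠ 0 := by
      rw [Ne, ZMod.natCast_eq_zero_iff]
      exact hnd
    simpa using h2
  have hspan : Ideal.span
      (Set.range (fun i : Fin 2 =>
        (X i : P) ^ (![2*q, 2*q, 2*q] i.castSucc)) ∪
        {(∑ i : Fin 2, (X i : P)) ^ (![2*q, 2*q, 2*q] (Fin.last 2))}) = J := by
    have hk : ∀ j : Fin 3, (![2*q, 2*q, 2*q]) j = 2*q := by
      intro j; fin_cases j <;> rfl
    have hsum2 : (∑ i : Fin 2, (X i : P)) = X 0 + X 1 := Fin.sum_univ_two X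
    apply le_antisymm
    · rw [Ideal.span_le]
      rintro f (⟨i, rfl⟩ | rfl)
      · fin_cases i
        · simp only [hk]; exact hx0
        · simp only [hk]; exact hx1
      · rw [hk, hsum2, hmain]
        exact add_mem (add_mem hx0 hx1) (Ideal.mul_mem_left _ _ hxy)
    · rw [Ideal.span_le]
      rintro f ⟨s, hs, rfl⟩
      rw [hS] at hs
      simp only [Set.mem_insert_iff, Set.mem_singleton_iff] at hs
      have hx0' : (X 0 : P) ^ (2*q) ∈ Ideal.span
          (Set.range (fun i : Fin 2 => (X i : P) ^ (![2*q, 2*q, 2*q] i.castSucc)) ∪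
            {(∑ i : Fin 2, (X i : P)) ^ (![2*q, 2*q, 2*q] (Fin.last 2))}) := by
        apply Ideal.subset_span
        exact Or.inl ⟨0, by simp only [hk]⟩
      have hx1' : (X 1 : P) ^ (2*q) ∈ Ideal.span
          (Set.range (fun i : Fin 2 => (X i : P) ^ (![2*q, 2*q, 2*q] i.castSucc)) ∪
            {(∑ i : Fin 2, (X i : P)) ^ (![2*q, 2*q, 2*q] (Fin.last 2))}) := by
        apply Ideal.subset_span
        exact Or.inl ⟨1, by simp only [hk]⟩
      have hxsum' : (X 0 + X 1 : P) ^ (2*q) ∈ Ideal.span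
          (Set.range (fun i : Fin 2 => (X i : P) ^ (![2*q, 2*q, 2*q] i.castSucc)) ∪
            {(∑ i : Fin 2, (X i : P)) ^ (![2*q, 2*q, 2*q] (Fin.last 2))}) := by
        apply Ideal.subset_span
        refine Or.inr ?_
        simp [hk, hsum2]
      beta_reduce
      rcases hs with rfl | rfl | rfl
      · rw [← X_pow_eq_monomial]; exact hx0'
      · rw [← X_pow_eq_monomial]; exact hx1'
      · have h2C : (2 : P) = C (2:F) := (map_ofNat (C : F →+* P) 2).symm
        have hm1 : (X 0:P)^q * X 1^q =
            monomial (Finsupp.single (0:Fin 2) q + Finsupp.single 1 q) (1:F) := by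
          rw [X_pow_eq_monomial, X_pow_eq_monomial, monomial_mul, one_mul]
        have hz : (X 0:P)^(2*q) + X 1^(2*q) + 2*((X 0:P)^q * X 1^q)
            - X 0^(2*q) - X 1^(2*q) = C (2:F) * ((X 0:P)^q * X 1^q) := by
          rw [← h2C]; ring
        have heq : (monomial (Finsupp.single (0:Fin 2) q + Finsupp.single 1 q) (1:F) : P) =
            C (2:F)⁻¹ * ((X 0 + X 1) ^ (2*q) - X 0 ^ (2*q) - X 1 ^ (2*q)) := by
          rw [← hm1, hmain, hz, ← mul_assoc, ← C_mul, inv_mul_cancel₀ h2ne, C_1, one_mul]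
        rw [heq]
        exact Ideal.mul_mem_left _ _ (sub_mem (sub_mem hxsum' hx0') hx1')
  unfold Dcolength
  rw [hspan, hJ, aux_finrank_quot_monomial F S G hSG, hcardG, hcardT]
end

section
/- Let p be an odd prime, set F = ℤ/pℤ, and for each integer N ≥ 1 let a_N = dim_F F[x, y]/(x^N, y^N, (x+y)^N)/N². Then the sequence (a_N) does not converge as N → ∞: along the subsequence N = p^n one has a_N = 1 for all n, while along the subsequence N = 2p^n one has a_N = 3/4 for all n. -/
open MvPolynomial Filter

/-! ### Auxiliary results -/

/-- Dimension of a quotient by a monomial ideal: it is the number of exponents not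
dominated by any generator exponent. -/
lemma HM.aux (F : Type) [Field F] (σ : Type) (S : Set (σ →₀ ℕ))
    (B : Set (σ →₀ ℕ)) (hB : B = {e | ∀ s ∈ S, ¬ s ≤ e}) (hfin : B.Finite) :
    Module.finrank F (MvPolynomial σ F ⧸
      Ideal.span ((fun e => MvPolynomial.monomial e (1:F)) '' S)) = Nat.card B := by
  classical
  haveI : Fintype B := hfin.fintype
  set I : Ideal (MvPolynomial σ F) := Ideal.span ((fun e => MvPolynomial.monomial e (1:F)) '' S)
    with hI
  let φ : MvPolynomial σ F →ₗ[F] (B →₀ F) :=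
    (Finsupp.lsubtypeDomain (M := F) (R := F) B : ((σ →₀ ℕ) →₀ F) →ₗ[F] _) ∘ₗ
      (AddMonoidAlgebra.coeffLinearEquiv F).toLinearMap
  have hker : LinearMap.ker φ = I.restrictScalars F := by
    ext x
    simp only [LinearMap.mem_ker, Submodule.restrictScalars_mem]
    rw [show φ x = Finsupp.subtypeDomain (· ∈ B) (AddMonoidAlgebra.coeff x) from rfl,
      Finsupp.subtypeDomain_eq_zero_iff', hI, mem_ideal_span_monomial_image]
    subst hB
    constructor
    · intro h xi hxi
      by_contra hc
      push_neg at hc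
      exact (MvPolynomial.mem_support_iff.mp hxi) (h xi hc)
    · intro h xi hxi
      by_contra hne
      obtain ⟨s, hs, hle⟩ := h xi (MvPolynomial.mem_support_iff.mpr hne)
      exact hxi s hs hle
  have hsurj : Function.Surjective φ := by
    intro g
    exact ⟨AddMonoidAlgebra.ofCoeff (g.extendDomain : (σ →₀ ℕ) →₀ F), Finsupp.subtypeDomain_extendDomain g⟩
  have hπ : Function.Surjective ((Ideal.Quotient.mkₐ F I).toLinearMap) :=
    Ideal.Quotient.mkₐ_surjective F I
  have hkerπ : LinearMap.ker ((Ideal.Quotient.mkₐ F I).toLinearMap) = I.restrictScalars F := by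
    ext x
    simp only [LinearMap.mem_ker, AlgHom.toLinearMap_apply, Ideal.Quotient.mkₐ_eq_mk,
      Submodule.restrictScalars_mem]
    exact Ideal.Quotient.eq_zero_iff_mem
  rw [← LinearEquiv.finrank_eq (LinearMap.quotKerEquivOfSurjective _ hπ), hkerπ, ← hker,
    LinearEquiv.finrank_eq (LinearMap.quotKerEquivOfSurjective _ hsurj),
    Module.finrank_finsupp_self, Nat.card_eq_fintype_card]

noncomputable def HM.boxEquiv (a b : ℕ) :
    {e : Fin 2 →₀ ℕ | e 0 < a ∧ e 1 < b} ≃ Fin a × Fin b where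
  toFun x := (⟨x.1 0, x.2.1⟩, ⟨x.1 1, x.2.2⟩)
  invFun y := ⟨Finsupp.single 0 y.1.1 + Finsupp.single 1 y.2.1, by
    constructor <;> simp [Finsupp.single_apply]⟩
  left_inv := by
    rintro ⟨e, he⟩
    apply Subtype.ext
    apply Finsupp.ext
    intro i
    fin_cases i <;> simp [Finsupp.single_apply]
  right_inv := by
    rintro ⟨x, y⟩
    apply Prod.ext <;> apply Fin.ext <;> simp [Finsupp.single_apply]

noncomputable def HM.cornerEquiv (q : ℕ) :
    {e : Fin 2 →₀ ℕ | (e 0 < 2*q ∧ e 1 < 2*q) ∧ q ≤ e 0 ∧ q ≤ e 1} ≃ Fin q × Fin q where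
  toFun x := (⟨x.1 0 - q, by obtain ⟨⟨h1,h2⟩,h3,h4⟩ := x.2; omega⟩,
    ⟨x.1 1 - q, by obtain ⟨⟨h1,h2⟩,h3,h4⟩ := x.2; omega⟩)
  invFun y := ⟨Finsupp.single 0 (q + y.1.1) + Finsupp.single 1 (q + y.2.1), by
    have := y.1.2; have := y.2.2
    refine ⟨⟨?_, ?_⟩, ?_, ?_⟩ <;> simp [Finsupp.single_apply] <;> omega⟩
  left_inv := by
    rintro ⟨e, he⟩
    apply Subtype.ext
    apply Finsupp.ext
    intro i
    obtain ⟨⟨h1,h2⟩,h3,h4⟩ := he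
    fin_cases i <;> simp [Finsupp.single_apply] <;> omega
  right_inv := by
    rintro ⟨x, y⟩
    apply Prod.ext <;> apply Fin.ext <;> simp [Finsupp.single_apply]

lemma HM.frob (F : Type) [Field F] (p n : ℕ) [hF : CharP F p] (hp : p.Prime) :
    ((X 0 + X 1 : MvPolynomial (Fin 2) F))^p^n = X 0 ^ p^n + X 1 ^ p^n := by
  haveI := Fact.mk hp
  exact add_pow_char_pow ..

lemma HM.ideal1 (F : Type) [Field F] (p n : ℕ) [hF : CharP F p] (hp : p.Prime) :
    Ideal.span ({X 0 ^ p^n, X 1 ^ p^n, (X 0 + X 1)^p^n} : Set (MvPolynomial (Fin 2) F)) =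
    Ideal.span ((fun e => monomial e (1:F)) ''
      {Finsupp.single 0 (p^n), Finsupp.single 1 (p^n)}) := by
  have himg : ((fun e => monomial e (1:F)) ''
      {Finsupp.single 0 (p^n), Finsupp.single 1 (p^n)} : Set (MvPolynomial (Fin 2) F))
      = {X 0 ^ p^n, X 1 ^ p^n} := by
    rw [Set.image_insert_eq, Set.image_singleton, ← X_pow_eq_monomial, ← X_pow_eq_monomial]
  rw [himg]
  apply le_antisymm <;> rw [Ideal.span_le]
  · rintro f (rfl | rfl | rfl)
    · exact Ideal.subset_span (by left; rfl)
    · exact Ideal.subset_span (by right; rfl)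
    · rw [HM.frob F p n hp]
      exact add_mem (Ideal.subset_span (by left; rfl)) (Ideal.subset_span (by right; rfl))
  · rintro f (rfl | rfl)
    · exact Ideal.subset_span (by left; rfl)
    · exact Ideal.subset_span (by right; left; rfl)

lemma HM.ideal2 (F : Type) [Field F] (p n : ℕ) [hF : CharP F p] (hp : p.Prime)
    (h2 : (2:F) ≠ 0) :
    Ideal.span ({X 0 ^ (2*p^n), X 1 ^ (2*p^n), (X 0 + X 1)^(2*p^n)} :
        Set (MvPolynomial (Fin 2) F)) =
    Ideal.span ((fun e => monomial e (1:F)) ''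
      {Finsupp.single 0 (2*p^n), Finsupp.single 1 (2*p^n),
        Finsupp.single 0 (p^n) + Finsupp.single 1 (p^n)}) := by
  set q := p^n with hq
  have hmon : (monomial (Finsupp.single 0 q + Finsupp.single 1 q) (1:F) :
      MvPolynomial (Fin 2) F) = X 0 ^ q * X 1 ^ q := by
    rw [X_pow_eq_monomial, X_pow_eq_monomial, monomial_mul, one_mul]
  have himg : ((fun e => monomial e (1:F)) ''
      {Finsupp.single 0 (2*q), Finsupp.single 1 (2*q),
        Finsupp.single 0 q + Finsupp.single 1 q} : Set (MvPolynomial (Fin 2) F))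
      = {X 0 ^ (2*q), X 1 ^ (2*q), X 0 ^ q * X 1 ^ q} := by
    rw [Set.image_insert_eq, Set.image_insert_eq, Set.image_singleton,
      ← X_pow_eq_monomial, ← X_pow_eq_monomial, hmon]
  rw [himg]
  have key : ((X 0 + X 1 : MvPolynomial (Fin 2) F))^(2*q) =
      X 0 ^ (2*q) + X 1 ^ (2*q) + 2*(X 0 ^ q * X 1 ^ q) := by
    rw [show 2*q = q*2 from mul_comm 2 q, pow_mul, pow_mul, pow_mul, HM.frob F p n hp]
    ring
  apply le_antisymm <;> rw [Ideal.span_le]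
  · rintro f (rfl | rfl | rfl)
    · exact Ideal.subset_span (by left; rfl)
    · exact Ideal.subset_span (by right; left; rfl)
    · rw [key]
      exact add_mem (add_mem (Ideal.subset_span (by left; rfl))
        (Ideal.subset_span (by right; left; rfl)))
        (Ideal.mul_mem_left _ 2 (Ideal.subset_span (by right; right; rfl)))
  · rintro f (rfl | rfl | rfl)
    · exact Ideal.subset_span (by left; rfl)
    · exact Ideal.subset_span (by right; left; rfl)
    · have h2' : ((X 0 : MvPolynomial (Fin 2) F)^ q * X 1 ^ q) =
          C (2⁻¹ : F) * ((X 0 + X 1)^(2*q) - X 0 ^ (2*q) - X 1 ^ (2*q)) := by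
        rw [key, show (X 0:MvPolynomial (Fin 2) F) ^ (2*q) + X 1 ^ (2*q) + 2*(X 0 ^ q * X 1 ^ q)
          - X 0 ^ (2*q) - X 1 ^ (2*q) = C (2:F) * (X 0 ^ q * X 1 ^ q) by
            rw [map_ofNat]; ring, ← mul_assoc, ← C_mul, inv_mul_cancel₀ h2, C_1, one_mul]
      rw [h2']
      exact Ideal.mul_mem_left _ _ (sub_mem (sub_mem
        (Ideal.subset_span (by right; right; rfl))
        (Ideal.subset_span (by left; rfl)))
        (Ideal.subset_span (by right; left; rfl)))

lemma HM.pairle (q : ℕ) (e : Fin 2 →₀ ℕ) :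
    (Finsupp.single 0 q + Finsupp.single 1 q ≤ e) ↔ (q ≤ e 0 ∧ q ≤ e 1) := by
  rw [Finsupp.le_def]
  simp [Fin.forall_fin_two, Finsupp.single_apply]

lemma HM.set1 (q : ℕ) :
    {e : Fin 2 →₀ ℕ | ∀ s ∈ ({Finsupp.single 0 q, Finsupp.single 1 q} :
        Set (Fin 2 →₀ ℕ)), ¬ s ≤ e} = {e : Fin 2 →₀ ℕ | e 0 < q ∧ e 1 < q} := by
  ext e
  simp [Finsupp.single_le_iff, not_le]

lemma HM.set2 (q : ℕ) :
    {e : Fin 2 →₀ ℕ | ∀ s ∈ ({Finsupp.single 0 (2*q), Finsupp.single 1 (2*q),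
        Finsupp.single 0 q + Finsupp.single 1 q} : Set (Fin 2 →₀ ℕ)), ¬ s ≤ e} =
    {e : Fin 2 →₀ ℕ | e 0 < 2*q ∧ e 1 < 2*q} \
      {e : Fin 2 →₀ ℕ | (e 0 < 2*q ∧ e 1 < 2*q) ∧ q ≤ e 0 ∧ q ≤ e 1} := by
  ext e
  simp only [Set.mem_setOf_eq, Set.mem_diff, Set.mem_insert_iff, Set.mem_singleton_iff,
    forall_eq_or_imp, forall_eq, Finsupp.single_le_iff, not_le, HM.pairle]
  constructor
  · rintro ⟨h1, h2, h3⟩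
    push_neg at h3 ⊢
    exact ⟨⟨h1, h2⟩, fun _ => h3⟩
  · rintro ⟨⟨h1, h2⟩, h3⟩
    push_neg at h3
    exact ⟨h1, h2, by push_neg; exact h3 ⟨h1, h2⟩⟩

lemma HM.dim1 (F : Type) [Field F] (p n : ℕ) [hF : CharP F p] (hp : p.Prime) :
    Module.finrank F (MvPolynomial (Fin 2) F ⧸
      Ideal.span ({X 0 ^ p^n, X 1 ^ p^n, (X 0 + X 1)^p^n} : Set (MvPolynomial (Fin 2) F)))
      = p^n * p^n := by
  have hfin : ({e : Fin 2 →₀ ℕ | e 0 < p^n ∧ e 1 < p^n}).Finite :=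
    Set.finite_coe_iff.mp (Finite.of_equiv _ (HM.boxEquiv (p^n) (p^n)).symm)
  rw [HM.ideal1 F p n hp, HM.aux F (Fin 2) _ _ (HM.set1 (p^n)).symm hfin,
    Nat.card_congr (HM.boxEquiv (p^n) (p^n))]
  simp

lemma HM.dim2 (F : Type) [Field F] (p n : ℕ) [hF : CharP F p] (hp : p.Prime)
    (h2 : (2:F) ≠ 0) :
    Module.finrank F (MvPolynomial (Fin 2) F ⧸
      Ideal.span ({X 0 ^ (2*p^n), X 1 ^ (2*p^n), (X 0 + X 1)^(2*p^n)} :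
        Set (MvPolynomial (Fin 2) F))) = 3 * (p^n * p^n) := by
  set q := p^n with hq
  have hfinBig : ({e : Fin 2 →₀ ℕ | e 0 < 2*q ∧ e 1 < 2*q}).Finite :=
    Set.finite_coe_iff.mp (Finite.of_equiv _ (HM.boxEquiv (2*q) (2*q)).symm)
  have hsub : {e : Fin 2 →₀ ℕ | (e 0 < 2*q ∧ e 1 < 2*q) ∧ q ≤ e 0 ∧ q ≤ e 1} ⊆
      {e : Fin 2 →₀ ℕ | e 0 < 2*q ∧ e 1 < 2*q} := fun e he => he.1
  have hfin : ({e : Fin 2 →₀ ℕ | e 0 < 2*q ∧ e 1 < 2*q} \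
      {e : Fin 2 →₀ ℕ | (e 0 < 2*q ∧ e 1 < 2*q) ∧ q ≤ e 0 ∧ q ≤ e 1}).Finite :=
    hfinBig.subset Set.diff_subset
  rw [HM.ideal2 F p n hp h2, HM.aux F (Fin 2) _ _ (HM.set2 q).symm hfin,
    Nat.card_coe_set_eq, Set.ncard_diff hsub (hfinBig.subset hsub),
    ← Nat.card_coe_set_eq, ← Nat.card_coe_set_eq,
    Nat.card_congr (HM.boxEquiv (2*q) (2*q)), Nat.card_congr (HM.cornerEquiv q)]
  simp only [Nat.card_prod, Nat.card_eq_fintype_card, Fintype.card_prod, Fintype.card_fin]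
  have : 2*q*(2*q) = 3*(q*q) + q*q := by ring
  omega

lemma HM.Dco_eq (F : Type) [Field F] (N : ℕ) :
    Dcolength F 2 ![N, N, N] = Module.finrank F (MvPolynomial (Fin 2) F ⧸
      Ideal.span ({X 0 ^ N, X 1 ^ N, (X 0 + X 1)^N} : Set (MvPolynomial (Fin 2) F))) := by
  have hset : (Set.range (fun i : Fin 2 =>
      (X i : MvPolynomial (Fin 2) F) ^ (![N,N,N] : Fin 3 → ℕ) i.castSucc) ∪
      {(∑ i : Fin 2, (X i : MvPolynomial (Fin 2) F)) ^ (![N,N,N] : Fin 3 → ℕ) (Fin.last 2)})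
      = ({X 0 ^ N, X 1 ^ N, (X 0 + X 1)^N} : Set (MvPolynomial (Fin 2) F)) := by
    have hk : ∀ j : Fin 3, (![N,N,N] : Fin 3 → ℕ) j = N := by
      intro j; fin_cases j <;> rfl
    simp only [hk, Fin.sum_univ_two]
    ext f
    simp only [Set.mem_union, Set.mem_range, Set.mem_singleton_iff, Set.mem_insert_iff,
      Fin.exists_fin_two]
    tauto
  unfold Dcolength
  rw [hset]

/-- Buchweitz–Chen: for an odd prime `p`, the sequence
`a_N = dim_F F[x,y]/(x^N, y^N, (x+y)^N)/N²` (with `F = ℤ/pℤ`) does not converge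
as `N → ∞`: along `N = p^n` one has `a_N = 1`, while along `N = 2p^n` one has
`a_N = 3/4`. -/
theorem statement13 (p : ℕ) (hp : p.Prime) (hodd : Odd p) :
    (¬ ∃ L : ℝ, Filter.Tendsto
        (fun N : ℕ => (Dcolength (ZMod p) 2 ![N, N, N] : ℝ) / (N : ℝ) ^ 2)
        Filter.atTop (nhds L)) ∧
    (∀ n : ℕ, (Dcolength (ZMod p) 2 ![p ^ n, p ^ n, p ^ n] : ℝ) / ((p : ℝ) ^ n) ^ 2 = 1) ∧
    (∀ n : ℕ, (Dcolength (ZMod p) 2 ![2 * p ^ n, 2 * p ^ n, 2 * p ^ n] : ℝ)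
        / ((2 * (p : ℝ) ^ n)) ^ 2 = 3 / 4) := by
  haveI := Fact.mk hp
  have hp2 : p ≠ 2 := by
    rintro rfl
    exact absurd hodd (by decide)
  have h2 : (2 : ZMod p) ≠ 0 := by
    intro h
    rw [show (2 : ZMod p) = ((2:ℕ) : ZMod p) by norm_cast,
      ZMod.natCast_eq_zero_iff] at h
    exact hp2 ((Nat.prime_dvd_prime_iff_eq hp Nat.prime_two).mp h)
  have key1 : ∀ n : ℕ, Dcolength (ZMod p) 2 ![p^n, p^n, p^n] = p^n * p^n := fun n => by
    rw [HM.Dco_eq, HM.dim1 (ZMod p) p n hp]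
  have key2 : ∀ n : ℕ, Dcolength (ZMod p) 2 ![2*p^n, 2*p^n, 2*p^n] = 3*(p^n*p^n) := fun n => by
    rw [HM.Dco_eq, HM.dim2 (ZMod p) p n hp h2]
  have hpne : ∀ n : ℕ, ((p:ℝ)^n) ≠ 0 := fun n =>
    pow_ne_zero _ (Nat.cast_ne_zero.mpr hp.pos.ne')
  have part2 : ∀ n : ℕ, (Dcolength (ZMod p) 2 ![p ^ n, p ^ n, p ^ n] : ℝ)
      / ((p : ℝ) ^ n) ^ 2 = 1 := by
    intro n
    rw [key1 n]
    push_cast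
    rw [sq, div_self (mul_ne_zero (hpne n) (hpne n))]
  have part3 : ∀ n : ℕ, (Dcolength (ZMod p) 2 ![2 * p ^ n, 2 * p ^ n, 2 * p ^ n] : ℝ)
      / ((2 * (p : ℝ) ^ n)) ^ 2 = 3 / 4 := by
    intro n
    rw [key2 n]
    push_cast
    rw [div_eq_div_iff (pow_ne_zero 2 (mul_ne_zero two_ne_zero (hpne n))) (by norm_num)]
    ring
  refine ⟨?_, part2, part3⟩
  rintro ⟨L, hL⟩
  have t1 : Tendsto (fun n : ℕ => p^n) atTop atTop :=
    tendsto_pow_atTop_atTop_of_one_lt hp.one_lt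
  have t2 : Tendsto (fun n : ℕ => 2*p^n) atTop atTop :=
    tendsto_atTop_mono (fun n => Nat.le_mul_of_pos_left _ (by norm_num)) t1
  have c1 := hL.comp t1
  have c2 := hL.comp t2
  have e1 : ((fun N : ℕ => (Dcolength (ZMod p) 2 ![N, N, N] : ℝ) / (N : ℝ) ^ 2)
      ∘ (fun n : ℕ => p^n)) = fun _ => (1:ℝ) := by
    funext n
    simp only [Function.comp_apply]
    rw [show ((p^n : ℕ) : ℝ) = (p:ℝ)^n by push_cast; ring]
    exact part2 n
  have e2 : ((fun N : ℕ => (Dcolength (ZMod p) 2 ![N, N, N] : ℝ) / (N : ℝ) ^ 2)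
      ∘ (fun n : ℕ => 2*p^n)) = fun _ => (3/4:ℝ) := by
    funext n
    simp only [Function.comp_apply]
    rw [show ((2*p^n : ℕ) : ℝ) = 2*(p:ℝ)^n by push_cast; ring]
    exact part3 n
  rw [e1] at c1
  rw [e2] at c2
  have hL1 : L = 1 := tendsto_nhds_unique c1 tendsto_const_nhds
  have hL2 : L = 3/4 := tendsto_nhds_unique c2 tendsto_const_nhds
  rw [hL1] at hL2
  norm_num at hL2
end
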